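/- arXiv:1211.4018 — 6 statements merged into one kernel-verified Lean document; each statement's English description precedes it below -/
import Mathlib

section
/- Fix g ≥ 1 and let σ = {⟨v_0⟩,…,⟨v_k⟩} be a k-simplex of the augmented complex B̂_g(ℤ). Then the vectors r(v_0),…,r(v_k) ∈ (ℤ/2)^{2g} are pairwise distinct and the set {r(v_0),…,r(v_k)} is a k-simplex of B̂_g(ℤ/2); moreover, if σ is a standard simplex (respectively a simplex of intersection type, a simplex of additive type), then so is its image. -/
open scoped BigOperators

/-- The free module `R^{2g}`. -/
abbrev SV (g : ℕ) (R : Type) [CommRing R] : Type := Fin (2*g) → R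

/-- The standard symplectic form on `R^{2g}`. -/
def symplForm (g : ℕ) (R : Type) [CommRing R] (v w : SV g R) : R :=
  ∑ i : Fin g,
    (v ⟨i.1, by have := i.isLt; omega⟩ * w ⟨g + i.1, by have := i.isLt; omega⟩ -
      v ⟨g + i.1, by have := i.isLt; omega⟩ * w ⟨i.1, by have := i.isLt; omega⟩)

/-- `(a; b)` is a symplectic basis of `R^{2g}`. -/
def IsSymplBasis (g : ℕ) (R : Type) [CommRing R] (a b : Fin g → SV g R) : Prop :=
  (∃ B : Module.Basis (Fin g ⊕ Fin g) R (SV g R),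
      (∀ i, B (Sum.inl i) = a i) ∧ (∀ i, B (Sum.inr i) = b i)) ∧
  (∀ i j, symplForm g R (a i) (a j) = 0) ∧
  (∀ i j, symplForm g R (b i) (b j) = 0) ∧
  (∀ i j, symplForm g R (a i) (b j) = if i = j then 1 else 0)

/-- `(a_1,…,a_k; b_1,…,b_l)` is a partial symplectic basis of `R^{2g}`:
it extends to a symplectic basis. -/
def IsPartialSymplBasis (g : ℕ) (R : Type) [CommRing R] {k l : ℕ}
    (a : Fin k → SV g R) (b : Fin l → SV g R) : Prop :=
  ∃ (hk : k ≤ g) (hl : l ≤ g) (A B : Fin g → SV g R), IsSymplBasis g R A B ∧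
    (∀ i, A (Fin.castLE hk i) = a i) ∧ (∀ j, B (Fin.castLE hl j) = b j)

/-- The lax vector `⟨v⟩ = {v, -v}`. -/
def lax {α : Type} [Neg α] (v : α) : Set α := {v, -v}

/-- Standard simplices of the complex of lax isotropic bases `B_g(R)`.  (The set of
vertices of a simplex.) -/
def IsStdSimplex (g : ℕ) (R : Type) [CommRing R] (σ : Set (Set (SV g R))) : Prop :=
  ∃ (k : ℕ) (a : Fin k → SV g R),
    IsPartialSymplBasis g R a (fun i : Fin 0 => i.elim0) ∧
    σ = Set.range fun i => lax (a i)

/-- Simplices of intersection type of the augmented complex `B̂_g(R)`. -/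
def IsIntSimplex (g : ℕ) (R : Type) [CommRing R] (σ : Set (Set (SV g R))) : Prop :=
  ∃ (k : ℕ) (a : Fin k → SV g R) (b : SV g R), 1 ≤ k ∧
    IsPartialSymplBasis g R a (fun _ : Fin 1 => b) ∧
    σ = insert (lax b) (Set.range fun i => lax (a i))

/-- Simplices of additive type of the augmented complex `B̂_g(R)`. -/
def IsAddSimplex (g : ℕ) (R : Type) [CommRing R] (σ : Set (Set (SV g R))) : Prop :=
  ∃ (k m : ℕ) (a : Fin k → SV g R) (ε : Fin k → R), (m = 2 ∨ m = 3) ∧ m ≤ k ∧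
    (∀ i, ε i = 1 ∨ ε i = -1) ∧
    IsPartialSymplBasis g R a (fun i : Fin 0 => i.elim0) ∧
    σ = insert (lax (∑ i : Fin k, if (i : ℕ) < m then ε i • a i else 0))
        (Set.range fun i => lax (a i))

/-- Simplices of the augmented complex of lax isotropic bases `B̂_g(R)`. -/
def IsHatSimplex (g : ℕ) (R : Type) [CommRing R] (σ : Set (Set (SV g R))) : Prop :=
  IsStdSimplex g R σ ∨ IsIntSimplex g R σ ∨ IsAddSimplex g R σ

/-- Coordinatewise reduction `ℤ^{2g} → (ℤ/2)^{2g}`. -/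
def rMap (g : ℕ) (v : SV g ℤ) : SV g (ZMod 2) := fun i => ((v i : ℤ) : ZMod 2)

/-- The reduction map on simplices, sending each lax vector `⟨v⟩` (as a set) to its image. -/
def rSimp (g : ℕ) (σ : Set (Set (SV g ℤ))) : Set (Set (SV g (ZMod 2))) :=
  (fun s => rMap g '' s) '' σ

/-- The group of `R`-linear automorphisms of `R^{2g}`. -/
abbrev SAut (g : ℕ) (R : Type) [CommRing R] : Type := (SV g R) ≃ₗ[R] (SV g R)

/-- The symplectic group `Sp_{2g}(R)`, as the subgroup of linear automorphisms of
`R^{2g}` preserving the standard symplectic form. -/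
def Sp (g : ℕ) (R : Type) [CommRing R] : Subgroup (SAut g R) where
  carrier := {M | ∀ v w, symplForm g R (M v) (M w) = symplForm g R v w}
  one_mem' := by intro v w; rfl
  mul_mem' := by
    intro M N hM hN v w
    exact (hM (N v) (N w)).trans (hN v w)
  inv_mem' := by
    intro M hM v w
    have h := hM (M.symm v) (M.symm w)
    simpa using h.symm

/-- The level 2 congruence subgroup `Sp_{2g}(ℤ)[2]`, the kernel of the reduction
`Sp_{2g}(ℤ) → Sp_{2g}(ℤ/2)`: symplectic automorphisms acting trivially mod 2. -/
def SpLevel2 (g : ℕ) : Subgroup (SAut g ℤ) where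
  carrier := {M | M ∈ Sp g ℤ ∧ ∀ v, rMap g (M v) = rMap g v}
  one_mem' := ⟨(Sp g ℤ).one_mem, fun _ => rfl⟩
  mul_mem' := by
    rintro M N ⟨hM, hM2⟩ ⟨hN, hN2⟩
    exact ⟨(Sp g ℤ).mul_mem hM hN, fun v => ((hM2 (N v)).trans (hN2 v) : _)⟩
  inv_mem' := by
    rintro M ⟨hM, hM2⟩
    refine ⟨(Sp g ℤ).inv_mem hM, fun v => ?_⟩
    have := hM2 (M.symm v)
    simp only [LinearEquiv.apply_symm_apply] at this
    exact this.symm ▸ rfl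

/-! ### Auxiliary lemmas for the reduction theorem -/

lemma zmod2_neg_eq : ∀ x : ZMod 2, -x = x := by decide

lemma rMap_neg (g : ℕ) (v : SV g ℤ) : rMap g (-v) = rMap g v := by
  funext i
  simp [rMap, zmod2_neg_eq]

lemma lax_cases {g : ℕ} {v w : SV g ℤ} (h : lax v = lax w) : v = w ∨ v = -w := by
  have hv : v ∈ lax w := h ▸ (Set.mem_insert v {-v})
  simpa [lax] using hv

lemma rMap_eq_of_lax {g : ℕ} {v w : SV g ℤ} (h : lax v = lax w) :
    rMap g v = rMap g w := by
  rcases lax_cases h with rfl | rfl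
  · rfl
  · exact rMap_neg g w

lemma inj_transfer {g n m : ℕ} (v : Fin n → SV g ℤ) (u : Fin m → SV g ℤ)
    (hinj : Function.Injective fun i => lax (v i))
    (hu : Function.Injective fun i => rMap g (u i))
    (hr : (Set.range fun i => lax (v i)) = Set.range fun i => lax (u i)) :
    Function.Injective fun i => rMap g (v i) := by
  intro i j hij
  have hi : lax (v i) ∈ Set.range fun t => lax (u t) := hr ▸ Set.mem_range_self i
  have hj : lax (v j) ∈ Set.range fun t => lax (u t) := hr ▸ Set.mem_range_self j
  obtain ⟨ti, hti⟩ := hi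
  obtain ⟨tj, htj⟩ := hj
  have h1 : rMap g (u ti) = rMap g (v i) := rMap_eq_of_lax hti
  have h2 : rMap g (u tj) = rMap g (v j) := rMap_eq_of_lax htj
  have : ti = tj := hu (show rMap g (u ti) = rMap g (u tj) by rw [h1, h2]; exact hij)
  exact hinj (show lax (v i) = lax (v j) by rw [← hti, ← htj, this])

lemma range_lax_rMap {g n m : ℕ} (v : Fin n → SV g ℤ) (u : Fin m → SV g ℤ)
    (hr : (Set.range fun i => lax (v i)) = Set.range fun i => lax (u i)) :
    (Set.range fun i => lax (rMap g (v i))) = Set.range fun i => lax (rMap g (u i)) := by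
  ext s
  constructor
  · rintro ⟨i, rfl⟩
    have : lax (v i) ∈ Set.range fun t => lax (u t) := hr ▸ Set.mem_range_self i
    obtain ⟨t, ht⟩ := this
    exact ⟨t, show lax (rMap g (u t)) = lax (rMap g (v i)) by rw [rMap_eq_of_lax ht]⟩
  · rintro ⟨t, rfl⟩
    have : lax (u t) ∈ Set.range fun i => lax (v i) := hr.symm ▸ Set.mem_range_self t
    obtain ⟨i, hi⟩ := this
    exact ⟨i, show lax (rMap g (v i)) = lax (rMap g (u t)) by rw [rMap_eq_of_lax hi]⟩

lemma exists_basis_reduce (g : ℕ) (B : Module.Basis (Fin g ⊕ Fin g) ℤ (SV g ℤ)) :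
    ∃ B' : Module.Basis (Fin g ⊕ Fin g) (ZMod 2) (SV g (ZMod 2)),
      ∀ i, B' i = rMap g (B i) := by
  classical
  let eqv : Fin g ⊕ Fin g ≃ Fin (2*g) := finSumFinEquiv.trans (finCongr (two_mul g).symm)
  let C : Module.Basis (Fin (2*g)) ℤ (SV g ℤ) := B.reindex eqv
  let e : Module.Basis (Fin (2*g)) ℤ (SV g ℤ) := Pi.basisFun ℤ (Fin (2*g))
  let e2 : Module.Basis (Fin (2*g)) (ZMod 2) (SV g (ZMod 2)) := Pi.basisFun (ZMod 2) (Fin (2*g))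
  let A : Matrix (Fin (2*g)) (Fin (2*g)) (ZMod 2) :=
    (e.toMatrix ⇑C).map (Int.castRingHom (ZMod 2))
  have hA : IsUnit A.det := by
    have h1 : IsUnit (e.toMatrix ⇑C).det := by
      rw [← Module.Basis.det_apply]; exact e.isUnit_det C
    rw [show A.det = (Int.castRingHom (ZMod 2)) (e.toMatrix ⇑C).det from
      ((Int.castRingHom (ZMod 2)).map_det _).symm]
    exact h1.map _
  have key : ∀ j, (A.toLinearEquiv e2 hA) (e2 j) = rMap g (C j) := by
    intro j
    have : (A.toLinearEquiv e2 hA) (e2 j) = ∑ i, A i j • e2 i := by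
      rw [Matrix.toLinearEquiv_apply, Matrix.toLin_self]
    rw [this]
    funext x
    have : (∑ i, A i j • e2 i) x = ∑ i, A i j • (e2 i x) := by
      rw [Finset.sum_apply]; rfl
    rw [this]
    have he2 : ∀ i, e2 i = Pi.single i (1 : ZMod 2) := fun i => Pi.basisFun_apply _ _ _
    simp only [he2, smul_eq_mul]
    rw [Finset.sum_eq_single x]
    · simp only [Pi.single_eq_same, mul_one]
      show ((Int.castRingHom (ZMod 2)) ((e.toMatrix ⇑C) x j)) = rMap g (C j) x
      rw [Module.Basis.toMatrix_apply]
      simp [e, Pi.basisFun_repr, rMap]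
    · intro b _ hb
      simp [Pi.single_apply, Ne.symm hb]
    · intro h; exact absurd (Finset.mem_univ x) h
  refine ⟨(e2.map (A.toLinearEquiv e2 hA)).reindex eqv.symm, fun i => ?_⟩
  rw [Module.Basis.reindex_apply, Equiv.symm_symm, Module.Basis.map_apply, key]
  have : C (eqv i) = B i := by rw [Module.Basis.reindex_apply, Equiv.symm_apply_apply]
  rw [this]

lemma symplForm_rMap (g : ℕ) (v w : SV g ℤ) :
    symplForm g (ZMod 2) (rMap g v) (rMap g w) = ((symplForm g ℤ v w : ℤ) : ZMod 2) := by
  unfold symplForm rMap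
  push_cast
  rfl

lemma reduce_partial (g : ℕ) {k l : ℕ} (a : Fin k → SV g ℤ) (b : Fin l → SV g ℤ)
    (h : IsPartialSymplBasis g ℤ a b) :
    IsPartialSymplBasis g (ZMod 2) (fun i => rMap g (a i)) (fun j => rMap g (b j)) := by
  obtain ⟨hk, hl, A, B, ⟨⟨B0, hB0a, hB0b⟩, hAA, hBB, hAB⟩, hA, hB⟩ := h
  obtain ⟨B', hB'⟩ := exists_basis_reduce g B0
  refine ⟨hk, hl, fun i => rMap g (A i), fun i => rMap g (B i),
    ⟨⟨B', fun i => by rw [hB' (Sum.inl i), hB0a], fun i => by rw [hB' (Sum.inr i), hB0b]⟩,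
     fun i j => by rw [symplForm_rMap, hAA]; norm_num,
     fun i j => by rw [symplForm_rMap, hBB]; norm_num,
     fun i j => by rw [symplForm_rMap, hAB]; split <;> norm_num⟩,
    fun i => congrArg (rMap g) (hA i), fun j => congrArg (rMap g) (hB j)⟩

lemma psb_vec_inj {R : Type} [CommRing R] [Nontrivial R] {g k l : ℕ}
    {a : Fin k → SV g R} {b : Fin l → SV g R}
    (h : IsPartialSymplBasis g R a b) :
    Function.Injective a ∧ Function.Injective b ∧ ∀ i j, a i ≠ b j := by
  obtain ⟨hk, hl, A, B, ⟨⟨B0, hB0a, hB0b⟩, -⟩, hA, hB⟩ := h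
  have hBinj : Function.Injective ⇑B0 := B0.injective
  have ha : ∀ i, a i = B0 (Sum.inl (Fin.castLE hk i)) := fun i => by rw [hB0a, hA]
  have hb : ∀ j, b j = B0 (Sum.inr (Fin.castLE hl j)) := fun j => by rw [hB0b, hB]
  refine ⟨fun i j hij => ?_, fun i j hij => ?_, fun i j hij => ?_⟩
  · rw [ha i, ha j] at hij
    exact Fin.castLE_injective hk (Sum.inl_injective (hBinj hij))
  · rw [hb i, hb j] at hij
    exact Fin.castLE_injective hl (Sum.inr_injective (hBinj hij))
  · rw [ha i, hb j] at hij
    exact Sum.inl_ne_inr (hBinj hij)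

lemma empty_fix {g k : ℕ} {a : Fin k → SV g (ZMod 2)} {b : Fin 0 → SV g (ZMod 2)}
    (h : IsPartialSymplBasis g (ZMod 2) a b) :
    IsPartialSymplBasis g (ZMod 2) a (fun i : Fin 0 => i.elim0) := by
  have hb : b = fun i : Fin 0 => i.elim0 := funext fun i => i.elim0
  rwa [hb] at h

lemma rMap_sum_eps {g k : ℕ} (m : ℕ) (a : Fin k → SV g ℤ) (ε : Fin k → ℤ)
    (hε : ∀ i, ε i = 1 ∨ ε i = -1) :
    rMap g (∑ i : Fin k, if (i : ℕ) < m then ε i • a i else 0) =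
      ∑ i : Fin k, if (i : ℕ) < m then rMap g (a i) else 0 := by
  funext x
  show (((∑ i : Fin k, if (i : ℕ) < m then ε i • a i else 0) x : ℤ) : ZMod 2)
      = (∑ i : Fin k, if (i : ℕ) < m then rMap g (a i) else 0) x
  rw [Finset.sum_apply, Finset.sum_apply, Int.cast_sum]
  refine Finset.sum_congr rfl fun i _ => ?_
  by_cases him : (i : ℕ) < m
  · rw [if_pos him, if_pos him]
    show (((ε i * a i x : ℤ)) : ZMod 2) = ((a i x : ℤ) : ZMod 2)
    rw [Int.cast_mul]
    rcases hε i with h | h <;> simp [h, zmod2_neg_eq]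
  · rw [if_neg him, if_neg him]
    simp

lemma sum_basis_ne {ι : Type} [Fintype ι] [DecidableEq ι] {M : Type}
    [AddCommGroup M] [Module (ZMod 2) M] (B : Module.Basis ι (ZMod 2) M)
    (s : Finset ι) {i0 i1 : ι} (h0 : i0 ∈ s) (h1 : i1 ∈ s) (hne : i0 ≠ i1) (j : ι) :
    (∑ i ∈ s, B i) ≠ B j := by
  intro h
  have h2 := congrArg B.repr h
  rw [map_sum] at h2
  simp only [Module.Basis.repr_self] at h2
  have key : ∀ t ∈ s, (1 : ZMod 2) = if j = t then 1 else 0 := by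
    intro t ht
    have h3 := DFunLike.congr_fun h2 t
    rw [Finset.sum_apply'] at h3
    simp only [Finsupp.single_apply] at h3
    rwa [Finset.sum_ite_eq' s t (fun _ => (1 : ZMod 2)), if_pos ht] at h3
  have k0 := key i0 h0
  have k1 := key i1 h1
  by_cases hj0 : j = i0
  · subst hj0
    rw [if_neg hne] at k1
    exact one_ne_zero k1
  · rw [if_neg hj0] at k0
    exact one_ne_zero k0

lemma rS_ne {g k m : ℕ} (hm2 : 2 ≤ m) (hmk : m ≤ k) {a : Fin k → SV g (ZMod 2)}
    (h : IsPartialSymplBasis g (ZMod 2) a (fun i : Fin 0 => i.elim0)) (j : Fin k) :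
    (∑ i : Fin k, if (i : ℕ) < m then a i else 0) ≠ a j := by
  classical
  obtain ⟨hk, hl, A, B, ⟨⟨B0, hB0a, hB0b⟩, -⟩, hA, hB⟩ := h
  have ha : ∀ i, a i = B0 (Sum.inl (Fin.castLE hk i)) := fun i => by rw [hB0a, hA]
  set ι : Fin k → Fin g ⊕ Fin g := fun i => Sum.inl (Fin.castLE hk i) with hι
  have hιinj : Function.Injective ι := fun i j hij =>
    Fin.castLE_injective hk (Sum.inl_injective hij)
  set s : Finset (Fin k) := Finset.univ.filter (fun i : Fin k => (i : ℕ) < m) with hs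
  have hsum : (∑ i : Fin k, if (i : ℕ) < m then a i else 0) = ∑ t ∈ s.image ι, B0 t := by
    rw [Finset.sum_image (fun x _ y _ hxy => hιinj hxy), Finset.sum_filter]
    refine Finset.sum_congr rfl fun i _ => ?_
    by_cases him : (i : ℕ) < m
    · rw [if_pos him, if_pos him, ha]
    · rw [if_neg him, if_neg him]
  have h0k : 0 < k := lt_of_lt_of_le (lt_of_lt_of_le two_pos hm2) hmk
  have h1k : 1 < k := lt_of_lt_of_le hm2 hmk
  have hmem : ∀ (x : Fin k), (x : ℕ) < m → ι x ∈ s.image ι := fun x hx =>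
    Finset.mem_image_of_mem ι (Finset.mem_filter.mpr ⟨Finset.mem_univ x, hx⟩)
  intro hcontra
  exact sum_basis_ne B0 (s.image ι)
    (hmem ⟨0, h0k⟩ (lt_of_lt_of_le two_pos hm2))
    (hmem ⟨1, h1k⟩ (lt_of_lt_of_le one_lt_two hm2))
    (fun hco => absurd (hιinj hco) (by simp [Fin.ext_iff]))
    (Sum.inl (Fin.castLE hk j)) (by rw [← hsum, ← ha, hcontra])

lemma std_case {g n : ℕ} (v : Fin n → SV g ℤ)
    (hinj : Function.Injective fun i => lax (v i))
    (h : IsStdSimplex g ℤ (Set.range fun i => lax (v i))) :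
    Function.Injective (fun i => rMap g (v i)) ∧
      IsStdSimplex g (ZMod 2) (Set.range fun i => lax (rMap g (v i))) := by
  obtain ⟨k, a, hpsb, hset⟩ := h
  have hred := reduce_partial g a _ hpsb
  have hra : Function.Injective fun i => rMap g (a i) := (psb_vec_inj hred).1
  exact ⟨inj_transfer v a hinj hra hset,
    k, fun i => rMap g (a i), empty_fix hred, range_lax_rMap v a hset⟩

lemma int_case {g n : ℕ} (v : Fin n → SV g ℤ)
    (hinj : Function.Injective fun i => lax (v i))
    (h : IsIntSimplex g ℤ (Set.range fun i => lax (v i))) :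
    Function.Injective (fun i => rMap g (v i)) ∧
      IsIntSimplex g (ZMod 2) (Set.range fun i => lax (rMap g (v i))) := by
  obtain ⟨k, a, b, hk1, hpsb, hset⟩ := h
  have hred := reduce_partial g a _ hpsb
  obtain ⟨hainj, -, hab⟩ := psb_vec_inj hred
  set u : Fin (k+1) → SV g ℤ := Fin.cons b a with hu
  have hset' : (Set.range fun i => lax (v i)) = Set.range fun i => lax (u i) := by
    rw [hset, show (fun i => lax (u i)) = Fin.cons (lax b) (fun i => lax (a i)) from
      funext fun i => Fin.cases (by simp [hu]) (fun j => by simp [hu]) i, Fin.range_cons]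
  have huinj : Function.Injective fun i => rMap g (u i) := by
    rw [show (fun i => rMap g (u i)) = Fin.cons (rMap g b) (fun i => rMap g (a i)) from
      funext fun i => Fin.cases (by simp [hu]) (fun j => by simp [hu]) i,
      Fin.cons_injective_iff]
    exact ⟨fun ⟨i, hi⟩ => hab i 0 hi, hainj⟩
  refine ⟨inj_transfer v u hinj huinj hset',
    k, fun i => rMap g (a i), rMap g b, hk1, hred, ?_⟩
  rw [range_lax_rMap v u hset',
    show (fun i => lax (rMap g (u i)))
        = Fin.cons (lax (rMap g b)) (fun i => lax (rMap g (a i))) from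
      funext fun i => Fin.cases (by simp [hu]) (fun j => by simp [hu]) i, Fin.range_cons]

lemma add_case {g n : ℕ} (v : Fin n → SV g ℤ)
    (hinj : Function.Injective fun i => lax (v i))
    (h : IsAddSimplex g ℤ (Set.range fun i => lax (v i))) :
    Function.Injective (fun i => rMap g (v i)) ∧
      IsAddSimplex g (ZMod 2) (Set.range fun i => lax (rMap g (v i))) := by
  obtain ⟨k, m, a, ε, hm, hmk, hε, hpsb, hset⟩ := h
  have hred := reduce_partial g a _ hpsb
  have hredfix := empty_fix hred
  have hainj : Function.Injective fun i => rMap g (a i) := (psb_vec_inj hred).1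
  have hm2 : 2 ≤ m := by rcases hm with rfl | rfl <;> norm_num
  set S : SV g ℤ := ∑ i : Fin k, if (i : ℕ) < m then ε i • a i else 0 with hS
  have hrS : rMap g S = ∑ i : Fin k, if (i : ℕ) < m then rMap g (a i) else 0 :=
    rMap_sum_eps m a ε hε
  have hSne : ∀ j, rMap g S ≠ rMap g (a j) := fun j => by
    rw [hrS]; exact rS_ne hm2 hmk hredfix j
  set u : Fin (k+1) → SV g ℤ := Fin.cons S a with hu
  have hset' : (Set.range fun i => lax (v i)) = Set.range fun i => lax (u i) := by
    rw [hset, show (fun i => lax (u i)) = Fin.cons (lax S) (fun i => lax (a i)) from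
      funext fun i => Fin.cases (by simp [hu]) (fun j => by simp [hu]) i, Fin.range_cons]
  have huinj : Function.Injective fun i => rMap g (u i) := by
    rw [show (fun i => rMap g (u i)) = Fin.cons (rMap g S) (fun i => rMap g (a i)) from
      funext fun i => Fin.cases (by simp [hu]) (fun j => by simp [hu]) i,
      Fin.cons_injective_iff]
    exact ⟨fun ⟨i, hi⟩ => hSne i hi.symm, hainj⟩
  refine ⟨inj_transfer v u hinj huinj hset',
    k, m, fun i => rMap g (a i), fun _ => (1 : ZMod 2), hm, hmk,
    fun i => Or.inl rfl, hredfix, ?_⟩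
  have hone : (∑ i : Fin k, if (i : ℕ) < m then (1 : ZMod 2) • rMap g (a i) else 0)
      = rMap g S := by
    rw [hrS]
    exact Finset.sum_congr rfl fun i _ => by split <;> simp
  rw [hone, range_lax_rMap v u hset',
    show (fun i => lax (rMap g (u i)))
        = Fin.cons (lax (rMap g S)) (fun i => lax (rMap g (a i))) from
      funext fun i => Fin.cases (by simp [hu]) (fun j => by simp [hu]) i, Fin.range_cons]

/-- The reduction of a `k`-simplex of the augmented complex
`B̂_g(ℤ)` is a `k`-simplex of `B̂_g(ℤ/2)` of the same type. -/
theorem reduction_of_simplex (g : ℕ) (hg : 1 ≤ g) (k : ℕ) (v : Fin (k+1) → SV g ℤ)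
    (hinj : Function.Injective fun i => lax (v i))
    (hσ : IsHatSimplex g ℤ (Set.range fun i => lax (v i))) :
    Function.Injective (fun i => rMap g (v i)) ∧
    IsHatSimplex g (ZMod 2) (Set.range fun i => lax (rMap g (v i))) ∧
    (IsStdSimplex g ℤ (Set.range fun i => lax (v i)) →
      IsStdSimplex g (ZMod 2) (Set.range fun i => lax (rMap g (v i)))) ∧
    (IsIntSimplex g ℤ (Set.range fun i => lax (v i)) →
      IsIntSimplex g (ZMod 2) (Set.range fun i => lax (rMap g (v i)))) ∧
    (IsAddSimplex g ℤ (Set.range fun i => lax (v i)) →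
      IsAddSimplex g (ZMod 2) (Set.range fun i => lax (rMap g (v i)))) := by
  refine ⟨?_, ?_, fun h => (std_case v hinj h).2, fun h => (int_case v hinj h).2,
    fun h => (add_case v hinj h).2⟩
  · rcases hσ with h | h | h
    exacts [(std_case v hinj h).1, (int_case v hinj h).1, (add_case v hinj h).1]
  · rcases hσ with h | h | h
    exacts [Or.inl (std_case v hinj h).2, Or.inr (Or.inl (int_case v hinj h).2),
      Or.inr (Or.inr (add_case v hinj h).2)]
end

section
/- Let g ≥ 1 and let (α_1,…,α_k; β_1,…,β_ℓ) be a partial symplectic basis of (ℤ/2)^{2g}. Then there exists a partial symplectic basis (a_1,…,a_k; b_1,…,b_ℓ) of ℤ^{2g} such that r(a_i) = α_i for 1 ≤ i ≤ k and r(b_j) = β_j for 1 ≤ j ≤ ℓ. -/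
open scoped BigOperators

namespace Lift
variable {R : Type} [CommRing R] {g : ℕ}

lemma sF_add_left (u v w : SV g R) :
    symplForm g R (u + v) w = symplForm g R u w + symplForm g R v w := by
  simp only [symplForm, Pi.add_apply]
  rw [← Finset.sum_add_distrib]
  exact Finset.sum_congr rfl fun i _ => by ring

lemma sF_add_right (u v w : SV g R) :
    symplForm g R u (v + w) = symplForm g R u v + symplForm g R u w := by
  simp only [symplForm, Pi.add_apply]
  rw [← Finset.sum_add_distrib]
  exact Finset.sum_congr rfl fun i _ => by ring

lemma sF_smul_left (c : R) (v w : SV g R) :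
    symplForm g R (c • v) w = c * symplForm g R v w := by
  simp only [symplForm, Pi.smul_apply, smul_eq_mul, Finset.mul_sum]
  exact Finset.sum_congr rfl fun i _ => by ring

lemma sF_smul_right (c : R) (v w : SV g R) :
    symplForm g R v (c • w) = c * symplForm g R v w := by
  simp only [symplForm, Pi.smul_apply, smul_eq_mul, Finset.mul_sum]
  exact Finset.sum_congr rfl fun i _ => by ring

lemma sF_self (v : SV g R) : symplForm g R v v = 0 := by
  simp only [symplForm]
  exact Finset.sum_eq_zero fun i _ => by ring

lemma sF_anti (v w : SV g R) : symplForm g R v w = - symplForm g R w v := by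
  simp only [symplForm, ← Finset.sum_neg_distrib]
  exact Finset.sum_congr rfl fun i _ => by ring

lemma sF_zero_left (w : SV g R) : symplForm g R 0 w = 0 := by
  simp only [symplForm, Pi.zero_apply]
  exact Finset.sum_eq_zero fun i _ => by ring

/-- standard basis vector -/
def ev (g : ℕ) (R : Type) [CommRing R] (p : Fin (2*g)) : SV g R := Pi.single p 1

lemma sF_ev_right (v : SV g R) (p : Fin (2*g)) :
    symplForm g R v (ev g R p) =
      if h : p.1 < g then -v ⟨g + p.1, by omega⟩ else v ⟨p.1 - g, by have := p.isLt; omega⟩ := by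
  simp only [symplForm, ev]
  split_ifs with h
  · rw [Finset.sum_eq_single (⟨p.1, h⟩ : Fin g)]
    · simp [Pi.single_apply, Fin.ext_iff]
      intro hc; omega
    · intro i _ hi
      have h1 : (⟨g + i.1, by omega⟩ : Fin (2*g)) ≠ p := by
        simp [Fin.ext_iff]; omega
      have h2 : (⟨i.1, by omega⟩ : Fin (2*g)) ≠ p := by
        simp [Fin.ext_iff]
        intro hc; apply hi; simp [Fin.ext_iff]; omega
      simp [Pi.single_apply, h1, h2]
    · simp
  · have hp := p.isLt
    rw [Finset.sum_eq_single (⟨p.1 - g, by omega⟩ : Fin g)]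
    · have e1 : g + (p.1 - g) = p.1 := by omega
      have e2 : ¬(p.1 - g = p.1) := by omega
      simp [Pi.single_apply, Fin.ext_iff, e1, e2]
    · intro i _ hi
      have h1 : (⟨g + i.1, by omega⟩ : Fin (2*g)) ≠ p := by
        simp [Fin.ext_iff]
        intro hc; apply hi; simp [Fin.ext_iff]; omega
      have h2 : (⟨i.1, by omega⟩ : Fin (2*g)) ≠ p := by
        simp [Fin.ext_iff]; omega
      simp [Pi.single_apply, h1, h2]
    · simp

lemma sF_ev_left (v : SV g R) (p : Fin (2*g)) :
    symplForm g R (ev g R p) v =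
      if h : p.1 < g then v ⟨g + p.1, by omega⟩ else -v ⟨p.1 - g, by have := p.isLt; omega⟩ := by
  rw [sF_anti, sF_ev_right]
  split_ifs <;> ring


lemma sF_sub_left (u v w : SV g R) :
    symplForm g R (u - v) w = symplForm g R u w - symplForm g R v w := by
  simp only [symplForm, Pi.sub_apply]
  rw [← Finset.sum_sub_distrib]
  exact Finset.sum_congr rfl fun i _ => by ring

/-- Symplectic transvection along `v`. -/
def transv (v : SV g R) : SV g R ≃ₗ[R] SV g R where
  toFun x := x + symplForm g R x v • v
  invFun x := x - symplForm g R x v • v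
  map_add' x y := by
    simp only [sF_add_left, add_smul]
    abel
  map_smul' c x := by
    simp only [sF_smul_left, RingHom.id_apply, smul_smul, smul_add]
  left_inv x := by
    simp only [sF_add_left, sF_smul_left, sF_self, mul_zero, add_zero, add_smul]
    abel
  right_inv x := by
    simp only [sF_sub_left, sF_smul_left, sF_self, mul_zero, sub_zero]
    abel

lemma transv_apply (v x : SV g R) : transv v x = x + symplForm g R x v • v := rfl

lemma transv_sympl (v x y : SV g R) :
    symplForm g R (transv v x) (transv v y) = symplForm g R x y := by
  simp only [transv_apply, sF_add_left, sF_add_right, sF_smul_left, sF_smul_right, sF_self,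
    mul_zero]
  have := sF_anti (R := R) v y
  ring_nf
  rw [sF_anti v y]
  ring

lemma transv_fix (v x : SV g R) (h : symplForm g R x v = 0) : transv v x = x := by
  simp [transv_apply, h]


lemma transv_transv (v x : SV g (ZMod 2)) : transv v (transv v x) = x := by
  simp only [transv_apply, sF_add_left, sF_smul_left, sF_self, mul_zero, add_zero, add_smul]
  rw [add_assoc, ← add_smul, CharTwo.add_self_eq_zero, zero_smul, add_zero]

lemma rMap_sF (v w : SV g ℤ) :
    symplForm g (ZMod 2) (rMap g v) (rMap g w) = ((symplForm g ℤ v w : ℤ) : ZMod 2) := by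
  simp only [symplForm, rMap]
  push_cast
  rfl

def intLift (v : SV g (ZMod 2)) : SV g ℤ := fun i => ((v i).val : ℤ)

lemma rMap_intLift (v : SV g (ZMod 2)) : rMap g (intLift v) = v := by
  funext i
  simp [rMap, intLift, ZMod.natCast_val, ZMod.cast_id]

lemma rMap_transv (v : SV g ℤ) (x : SV g ℤ) :
    rMap g (transv v x) = transv (rMap g v) (rMap g x) := by
  funext i
  simp only [transv_apply, rMap, Pi.add_apply, Pi.smul_apply, smul_eq_mul]
  push_cast
  rw [← rMap_sF]


lemma isSymplBasis_map {A B : Fin g → SV g R} (h : IsSymplBasis g R A B)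
    (E : SV g R ≃ₗ[R] SV g R)
    (hE : ∀ x y, symplForm g R (E x) (E y) = symplForm g R x y) :
    IsSymplBasis g R (fun i => E (A i)) (fun i => E (B i)) := by
  obtain ⟨⟨Bas, hA, hB⟩, h1, h2, h3⟩ := h
  refine ⟨⟨Bas.map E, fun i => ?_, fun i => ?_⟩,
    fun i j => by rw [hE]; exact h1 i j,
    fun i j => by rw [hE]; exact h2 i j,
    fun i j => by rw [hE]; exact h3 i j⟩
  · rw [Module.Basis.map_apply, hA]
  · rw [Module.Basis.map_apply, hB]

def Liftable (A B : Fin g → SV g (ZMod 2)) : Prop :=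
  ∃ A' B' : Fin g → SV g ℤ, IsSymplBasis g ℤ A' B' ∧
    (∀ i, rMap g (A' i) = A i) ∧ (∀ i, rMap g (B' i) = B i)

lemma liftable_of_transv {A B : Fin g → SV g (ZMod 2)} (v : SV g (ZMod 2))
    (h : Liftable (fun i => transv v (A i)) (fun i => transv v (B i))) :
    Liftable A B := by
  obtain ⟨A', B', hs, hA, hB⟩ := h
  refine ⟨fun i => transv (intLift v) (A' i), fun i => transv (intLift v) (B' i),
    isSymplBasis_map hs _ (transv_sympl _), fun i => ?_, fun i => ?_⟩
  · rw [rMap_transv, rMap_intLift, hA, transv_transv]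
  · rw [rMap_transv, rMap_intLift, hB, transv_transv]


def eA (g : ℕ) (R : Type) [CommRing R] (i : Fin g) : SV g R :=
  ev g R ⟨i.1, by have := i.isLt; omega⟩

def eB (g : ℕ) (R : Type) [CommRing R] (i : Fin g) : SV g R :=
  ev g R ⟨g + i.1, by have := i.isLt; omega⟩

lemma ev_apply (p q : Fin (2*g)) : ev g R p q = if q = p then 1 else 0 := by
  simp [ev, Pi.single_apply]

lemma sF_eA_eA (i j : Fin g) : symplForm g R (eA g R i) (eA g R j) = 0 := by
  rw [eA, sF_ev_left]
  have hi := i.isLt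
  have hj := j.isLt
  rw [dif_pos hi]
  rw [eA, ev_apply, if_neg (by simp [Fin.ext_iff]; omega)]

lemma sF_eB_eB (i j : Fin g) : symplForm g R (eB g R i) (eB g R j) = 0 := by
  rw [eB, sF_ev_left]
  have hi := i.isLt
  rw [dif_neg (by show ¬ (g + i.1 < g); omega)]
  have hj := j.isLt
  have h2 : g + i.1 - g = i.1 := by omega
  simp only [h2]
  rw [eB, ev_apply, if_neg (by simp [Fin.ext_iff]; omega), neg_zero]

lemma sF_eA_eB (i j : Fin g) : symplForm g R (eA g R i) (eB g R j) = if i = j then 1 else 0 := by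
  rw [eA, sF_ev_left]
  have hi := i.isLt
  rw [dif_pos hi]
  rw [eB, ev_apply]
  by_cases h : i = j
  · subst h; simp
  · rw [if_neg (by simp [Fin.ext_iff]; intro hc; exact h (Fin.ext (by omega))), if_neg h]

lemma isSymplBasis_std : IsSymplBasis g R (eA g R) (eB g R) := by
  refine ⟨?_, sF_eA_eA, sF_eB_eB, sF_eA_eB⟩
  refine ⟨(Pi.basisFun R (Fin (2*g))).reindex
    ((finSumFinEquiv.trans (finCongr (by ring : g + g = 2*g))).symm), fun i => ?_, fun i => ?_⟩
  · rw [Module.Basis.reindex_apply, Equiv.symm_symm]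
    simp only [Equiv.trans_apply, finSumFinEquiv_apply_left, Pi.basisFun_apply]
    rfl
  · rw [Module.Basis.reindex_apply, Equiv.symm_symm]
    simp only [Equiv.trans_apply, finSumFinEquiv_apply_right, Pi.basisFun_apply]
    rfl

lemma rMap_ev (p : Fin (2*g)) : rMap g (ev g ℤ p) = ev g (ZMod 2) p := by
  funext q
  rw [rMap, ev_apply, ev_apply]
  split_ifs <;> simp

lemma rMap_eA (i : Fin g) : rMap g (eA g ℤ i) = eA g (ZMod 2) i := rMap_ev _
lemma rMap_eB (i : Fin g) : rMap g (eB g ℤ i) = eB g (ZMod 2) i := rMap_ev _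

/-- coordinates `i` and `g+i` vanish for `i < k` -/
def Wk (g k : ℕ) (x : SV g (ZMod 2)) : Prop :=
  ∀ p : Fin (2*g), (p.1 < k ∨ (g ≤ p.1 ∧ p.1 < g + k)) → x p = 0

lemma Wk_zero (k : ℕ) : Wk g k (0 : SV g (ZMod 2)) := fun _ _ => rfl

lemma Wk_add {k : ℕ} {x y : SV g (ZMod 2)} (hx : Wk g k x) (hy : Wk g k y) :
    Wk g k (x + y) := fun p hp => by
  simp [Pi.add_apply, hx p hp, hy p hp]

lemma Wk_ev {k : ℕ} (p : Fin (2*g)) (h : ¬(p.1 < k ∨ (g ≤ p.1 ∧ p.1 < g + k))) :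
    Wk g k (ev g (ZMod 2) p) := by
  intro q hq
  rw [ev_apply, if_neg]
  intro hc; subst hc; exact h hq

lemma Wk_transv {k : ℕ} {v x : SV g (ZMod 2)} (hv : Wk g k v) (hx : Wk g k x) :
    Wk g k (transv v x) := fun p hp => by
  simp [transv_apply, hx p hp, hv p hp]

lemma sF_eA_Wk {k : ℕ} (hk : k ≤ g) {i : Fin g} (hi : i.1 < k) {v : SV g (ZMod 2)}
    (hv : Wk g k v) : symplForm g (ZMod 2) (eA g (ZMod 2) i) v = 0 := by
  rw [eA, sF_ev_left, dif_pos i.isLt]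
  refine hv ⟨g + i.1, by have := i.isLt; omega⟩ (Or.inr ⟨by simp, by simp; omega⟩)

lemma sF_eB_Wk {k : ℕ} (hk : k ≤ g) {i : Fin g} (hi : i.1 < k) {v : SV g (ZMod 2)}
    (hv : Wk g k v) : symplForm g (ZMod 2) (eB g (ZMod 2) i) v = 0 := by
  rw [eB, sF_ev_left, dif_neg (by show ¬ (g + i.1 < g); omega)]
  rw [hv _ (Or.inl (by show g + i.1 - g < k; omega)), neg_zero]

lemma transv_zero (x : SV g R) : transv (0 : SV g R) x = x := by
  simp [transv_apply]

lemma addSelf (x : SV g (ZMod 2)) : x + x = 0 := by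
  funext i
  exact CharTwo.add_self_eq_zero _

lemma transv_swap {x y : SV g (ZMod 2)} (h : symplForm g (ZMod 2) x y = 1) :
    transv (x + y) x = y := by
  rw [transv_apply, sF_add_right, sF_self, zero_add, h, one_smul]
  rw [show x + (x + y) = (x + x) + y by abel, addSelf, zero_add]

lemma zmod2_cases (c : ZMod 2) : c = 0 ∨ c = 1 := by revert c; decide

lemma zmod2_neg (c : ZMod 2) : -c = c := by revert c; decide


lemma sF_ev_hi (v : SV g R) (m : ℕ) (hm : m < g) {hp : g + m < 2*g} :
    symplForm g R v (ev g R ⟨g + m, hp⟩) = v ⟨m, by omega⟩ := by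
  rw [sF_ev_right, dif_neg (by show ¬ (g + m < g); omega)]
  congr 1
  exact Fin.ext (by show g + m - g = m; omega)

lemma sF_ev_lo (v : SV g R) (m : ℕ) (hm : m < g) {hp : m < 2*g} :
    symplForm g R v (ev g R ⟨m, hp⟩) = -v ⟨g + m, by omega⟩ := by
  rw [sF_ev_right, dif_pos (show (⟨m, by omega⟩ : Fin (2*g)).1 < g from hm)]

lemma sF_lo_ev (v : SV g R) (m : ℕ) (hm : m < g) {hp : m < 2*g} :
    symplForm g R (ev g R ⟨m, hp⟩) v = v ⟨g + m, by omega⟩ := by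
  rw [sF_ev_left, dif_pos (show (⟨m, by omega⟩ : Fin (2*g)).1 < g from hm)]

lemma sF_hi_ev (v : SV g R) (m : ℕ) (hm : m < g) {hp : g + m < 2*g} :
    symplForm g R (ev g R ⟨g + m, hp⟩) v = -v ⟨m, by omega⟩ := by
  rw [sF_ev_left, dif_neg (by show ¬ (g + m < g); omega)]
  congr 2
  exact Fin.ext (by show g + m - g = m; omega)

lemma Wk_ev' {k : ℕ} (m : ℕ) (hm : m < 2*g)
    (h : ¬ (m < k ∨ (g ≤ m ∧ m < g + k))) : Wk g k (ev g (ZMod 2) ⟨m, hm⟩) :=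
  Wk_ev _ h

lemma stepA {k : ℕ} (hk : k < g) {α : SV g (ZMod 2)} (hW : Wk g k α) (hne : α ≠ 0) :
    ∃ u₁ u₂ : SV g (ZMod 2), Wk g k u₁ ∧ Wk g k u₂ ∧
      transv u₁ (transv u₂ α) = ev g (ZMod 2) ⟨k, by omega⟩ := by
  set e : SV g (ZMod 2) := ev g (ZMod 2) ⟨k, by omega⟩ with he
  have hWe : Wk g k e := Wk_ev _ (by show ¬ (k < k ∨ (g ≤ k ∧ k < g + k)); omega)
  by_cases hea : α = e
  · exact ⟨0, 0, Wk_zero _, Wk_zero _, by rw [transv_zero, transv_zero, hea]⟩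
  rcases zmod2_cases (symplForm g (ZMod 2) e α) with h0 | h1
  swap
  · refine ⟨0, α + e, Wk_zero _, Wk_add hW hWe, ?_⟩
    rw [transv_zero, transv_swap (by rw [sF_anti, h1]; decide)]
  · have hgk : α ⟨g + k, by omega⟩ = 0 := by rw [he, sF_lo_ev _ k hk] at h0; exact h0
    have hγ : ∃ γ, Wk g k γ ∧ symplForm g (ZMod 2) e γ = 1 ∧
        symplForm g (ZMod 2) α γ = 1 := by
      rcases zmod2_cases (α ⟨k, by omega⟩) with hak | hak
      · -- α_k = 0 : need some other nonzero coordinate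
        obtain ⟨j, hj⟩ := Function.ne_iff.mp hne
        have haj : α j = 1 := (zmod2_cases _).resolve_left hj
        have hj1 : ¬ (j.1 < k) := fun hc => hj (hW j (Or.inl hc))
        have hj2 : ¬ (g ≤ j.1 ∧ j.1 < g + k) := fun hc => hj (hW j (Or.inr hc))
        have hjk : j.1 ≠ k := by
          intro hc
          rw [show j = ⟨k, by omega⟩ from Fin.ext hc, hak] at haj
          exact one_ne_zero haj.symm
        have hjgk : j.1 ≠ g + k := by
          intro hc
          rw [show j = ⟨g + k, by omega⟩ from Fin.ext hc, hgk] at haj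
          exact one_ne_zero haj.symm
        have hj3 := j.isLt
        by_cases hjg : j.1 < g
        · refine ⟨ev g (ZMod 2) ⟨g + j.1, by omega⟩ + ev g (ZMod 2) ⟨g + k, by omega⟩,
            Wk_add (Wk_ev' _ (by omega) (by omega)) (Wk_ev' _ (by omega) (by omega)), ?_, ?_⟩
          · rw [sF_add_right, sF_ev_hi _ _ hjg, sF_ev_hi _ _ hk, he,
              ev_apply, ev_apply, if_neg (by simp [Fin.ext_iff]; omega),
              if_pos rfl, zero_add]
          · rw [sF_add_right, sF_ev_hi _ _ hjg, sF_ev_hi _ _ hk,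
              show (⟨j.1, by omega⟩ : Fin (2*g)) = j from Fin.ext rfl, haj, hak, add_zero]
        · refine ⟨ev g (ZMod 2) ⟨j.1 - g, by omega⟩ + ev g (ZMod 2) ⟨g + k, by omega⟩,
            Wk_add (Wk_ev' _ (by omega) (by omega)) (Wk_ev' _ (by omega) (by omega)), ?_, ?_⟩
          · rw [sF_add_right, sF_ev_lo _ _ (by omega), sF_ev_hi _ _ hk, he,
              ev_apply, ev_apply, if_neg (by simp [Fin.ext_iff]; omega),
              if_pos rfl, neg_zero, zero_add]
          · rw [sF_add_right, sF_ev_lo _ _ (by omega), sF_ev_hi _ _ hk,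
              show (⟨g + (j.1 - g), by omega⟩ : Fin (2*g)) = j from Fin.ext (by show g + (j.1 - g) = j.1; omega),
              haj, show (⟨k, by omega⟩ : Fin (2*g)) = ⟨k, by omega⟩ from rfl, hak, add_zero]
            decide
      · -- α_k = 1 : γ = f
        refine ⟨ev g (ZMod 2) ⟨g + k, by omega⟩, Wk_ev' _ (by omega) (by omega), ?_, ?_⟩
        · rw [he, sF_ev_hi _ _ hk, ev_apply, if_pos rfl]
        · rw [sF_ev_hi _ _ hk]; exact hak
    obtain ⟨γ, hWγ, heγ, haγ⟩ := hγ
    refine ⟨γ + e, α + γ, Wk_add hWγ hWe, Wk_add hW hWγ, ?_⟩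
    rw [transv_swap haγ, transv_swap (by rw [sF_anti, heγ]; decide)]

lemma stepB {k : ℕ} (hk : k < g) {β₁ : SV g (ZMod 2)} (hW : Wk g k β₁)
    (hpair : symplForm g (ZMod 2) (ev g (ZMod 2) ⟨k, by omega⟩) β₁ = 1) :
    ∃ w₁ w₂ : SV g (ZMod 2), Wk g k w₁ ∧ Wk g k w₂ ∧
      symplForm g (ZMod 2) (ev g (ZMod 2) ⟨k, by omega⟩) w₁ = 0 ∧
      symplForm g (ZMod 2) (ev g (ZMod 2) ⟨k, by omega⟩) w₂ = 0 ∧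
      transv w₁ (transv w₂ β₁) = ev g (ZMod 2) ⟨g + k, by omega⟩ := by
  set e : SV g (ZMod 2) := ev g (ZMod 2) ⟨k, by omega⟩ with he
  set f : SV g (ZMod 2) := ev g (ZMod 2) ⟨g + k, by omega⟩ with hf
  have hWe : Wk g k e := Wk_ev _ (by show ¬ (k < k ∨ (g ≤ k ∧ k < g + k)); omega)
  have hWf : Wk g k f := Wk_ev' _ (by omega) (by omega)
  have hef : symplForm g (ZMod 2) e f = 1 := by
    rw [he, hf, sF_ev_hi _ _ hk, ev_apply, if_pos rfl]
  have hee : symplForm g (ZMod 2) e e = 0 := sF_self e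
  have hzero : symplForm g (ZMod 2) e (0 : SV g (ZMod 2)) = 0 := by
    rw [show (0 : SV g (ZMod 2)) = (0 : ZMod 2) • 0 by simp, sF_smul_right, zero_mul]
  by_cases hbf : β₁ = f
  · exact ⟨0, 0, Wk_zero _, Wk_zero _, hzero, hzero, by rw [transv_zero, transv_zero, hbf]⟩
  rcases zmod2_cases (symplForm g (ZMod 2) β₁ f) with h0 | h1
  swap
  · refine ⟨0, β₁ + f, Wk_zero _, Wk_add hW hWf, hzero, ?_, ?_⟩
    · rw [sF_add_right, hpair, hef]; decide
    · rw [transv_zero, transv_swap h1]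
  · refine ⟨(β₁ + e) + f, e, Wk_add (Wk_add hW hWe) hWf, hWe, ?_, hee, ?_⟩
    · rw [sF_add_right, sF_add_right, hpair, hee, hef]; decide
    · have h2 : transv e β₁ = β₁ + e := by
        rw [transv_apply, sF_anti, hpair, show (-1 : ZMod 2) = 1 from by decide, one_smul]
      rw [h2, transv_swap (by rw [sF_add_left, h0, hef, zero_add])]


lemma lift_main : ∀ d k, k + d = g →
    ∀ A B : Fin g → SV g (ZMod 2), IsSymplBasis g (ZMod 2) A B →
    (∀ i : Fin g, i.1 < k → A i = eA g (ZMod 2) i ∧ B i = eB g (ZMod 2) i) →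
    Liftable A B := by
  intro d
  induction d with
  | zero =>
    intro k hkg A B hAB hfix
    refine ⟨eA g ℤ, eB g ℤ, isSymplBasis_std, fun i => ?_, fun i => ?_⟩
    · rw [rMap_eA, (hfix i (by omega)).1]
    · rw [rMap_eB, (hfix i (by omega)).2]
  | succ d ih =>
    intro k hkg A B hAB hfix
    have hk : k < g := by omega
    obtain ⟨hBas, h1, h2, h3⟩ := id hAB
    set i₀ : Fin g := ⟨k, hk⟩ with hi₀
    have hα1 : symplForm g (ZMod 2) (A i₀) (B i₀) = 1 := by rw [h3 i₀ i₀, if_pos rfl]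
    have hαne : A i₀ ≠ 0 := fun hc => by
      rw [hc, sF_zero_left] at hα1; exact zero_ne_one hα1
    have hWα : Wk g k (A i₀) := by
      intro p hp
      rcases hp with hp | hp
      · have hp2 : p.1 < g := by omega
        have := h3 i₀ ⟨p.1, hp2⟩
        rw [if_neg (by simp [Fin.ext_iff, hi₀]; omega)] at this
        rw [(hfix ⟨p.1, hp2⟩ hp).2, eB, sF_ev_hi _ _ hp2] at this
        rwa [show (⟨p.1, by omega⟩ : Fin (2*g)) = p from Fin.ext rfl] at this
      · have hp2 : p.1 - g < g := by omega
        have hp3 : p.1 - g < k := by omega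
        have := h1 ⟨p.1 - g, hp2⟩ i₀
        rw [(hfix ⟨p.1 - g, hp2⟩ hp3).1, eA, sF_lo_ev _ _ hp2] at this
        rwa [show (⟨g + (p.1 - g), by omega⟩ : Fin (2*g)) = p from
          Fin.ext (by show g + (p.1 - g) = p.1; omega)] at this
    have hWβ : Wk g k (B i₀) := by
      intro p hp
      rcases hp with hp | hp
      · have hp2 : p.1 < g := by omega
        have := h2 ⟨p.1, hp2⟩ i₀
        rw [(hfix ⟨p.1, hp2⟩ hp).2, eB, sF_hi_ev _ _ hp2] at this
        rw [neg_eq_zero] at this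
        rwa [show (⟨p.1, by omega⟩ : Fin (2*g)) = p from Fin.ext rfl] at this
      · have hp2 : p.1 - g < g := by omega
        have hp3 : p.1 - g < k := by omega
        have := h3 ⟨p.1 - g, hp2⟩ i₀
        rw [if_neg (by simp [Fin.ext_iff, hi₀]; omega)] at this
        rw [(hfix ⟨p.1 - g, hp2⟩ hp3).1, eA, sF_lo_ev _ _ hp2] at this
        rwa [show (⟨g + (p.1 - g), by omega⟩ : Fin (2*g)) = p from
          Fin.ext (by show g + (p.1 - g) = p.1; omega)] at this
    obtain ⟨u₁, u₂, hu₁, hu₂, huα⟩ := stepA hk hWα hαne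
    set β₁ : SV g (ZMod 2) := transv u₁ (transv u₂ (B i₀)) with hβ₁
    have hWβ₁ : Wk g k β₁ := Wk_transv hu₁ (Wk_transv hu₂ hWβ)
    have hpair : symplForm g (ZMod 2) (ev g (ZMod 2) ⟨k, by omega⟩) β₁ = 1 := by
      rw [← huα, hβ₁, transv_sympl, transv_sympl]; exact hα1
    obtain ⟨w₁, w₂, hw₁, hw₂, hew₁, hew₂, hwβ⟩ := stepB hk hWβ₁ hpair
    have hAB₂ : IsSymplBasis g (ZMod 2)
        (fun i => transv w₁ (transv w₂ (transv u₁ (transv u₂ (A i)))))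
        (fun i => transv w₁ (transv w₂ (transv u₁ (transv u₂ (B i))))) :=
      isSymplBasis_map (isSymplBasis_map (isSymplBasis_map
        (isSymplBasis_map hAB (transv u₂) (transv_sympl u₂))
        (transv u₁) (transv_sympl u₁)) (transv w₂) (transv_sympl w₂))
        (transv w₁) (transv_sympl w₁)
    have hfix₂ : ∀ i : Fin g, i.1 < k + 1 →
        transv w₁ (transv w₂ (transv u₁ (transv u₂ (A i)))) = eA g (ZMod 2) i ∧
        transv w₁ (transv w₂ (transv u₁ (transv u₂ (B i)))) = eB g (ZMod 2) i := by
      intro i hi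
      rcases Nat.lt_or_ge i.1 k with hik | hik
      · obtain ⟨hA, hB⟩ := hfix i hik
        have fixa : ∀ v, Wk g k v → transv v (eA g (ZMod 2) i) = eA g (ZMod 2) i :=
          fun v hv => transv_fix _ _ (sF_eA_Wk (le_of_lt hk) hik hv)
        have fixb : ∀ v, Wk g k v → transv v (eB g (ZMod 2) i) = eB g (ZMod 2) i :=
          fun v hv => transv_fix _ _ (sF_eB_Wk (le_of_lt hk) hik hv)
        constructor
        · rw [hA, fixa _ hu₂, fixa _ hu₁, fixa _ hw₂, fixa _ hw₁]
        · rw [hB, fixb _ hu₂, fixb _ hu₁, fixb _ hw₂, fixb _ hw₁]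
      · have hik' : i = i₀ := Fin.ext (by rw [hi₀]; show i.1 = k; omega)
        constructor
        · rw [hik', huα, transv_fix _ _ hew₂, transv_fix _ _ hew₁]
          rfl
        · rw [hik', ← hβ₁, hwβ]
          rfl
    have hLift₂ := ih (k+1) (by omega) _ _ hAB₂ hfix₂
    exact liftable_of_transv u₂ (liftable_of_transv u₁
      (liftable_of_transv w₂ (liftable_of_transv w₁ hLift₂)))

lemma liftable_all (A B : Fin g → SV g (ZMod 2)) (hAB : IsSymplBasis g (ZMod 2) A B) :
    Liftable A B :=
  lift_main g 0 (by omega) A B hAB (fun i hi => absurd hi (by omega))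

end Lift

/-- Every partial symplectic basis of `(ℤ/2)^{2g}` lifts to a partial
symplectic basis of `ℤ^{2g}`. -/
theorem lift_partial_symplectic_basis (g : ℕ) (hg : 1 ≤ g) (k l : ℕ)
    (α : Fin k → SV g (ZMod 2)) (β : Fin l → SV g (ZMod 2))
    (h : IsPartialSymplBasis g (ZMod 2) α β) :
    ∃ (a : Fin k → SV g ℤ) (b : Fin l → SV g ℤ),
      IsPartialSymplBasis g ℤ a b ∧
      (∀ i, rMap g (a i) = α i) ∧ (∀ j, rMap g (b j) = β j) := by
  obtain ⟨hk, hl, A, B, hAB, hA, hB⟩ := h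
  obtain ⟨A', B', hAB', hrA, hrB⟩ := Lift.liftable_all A B hAB
  exact ⟨fun i => A' (Fin.castLE hk i), fun j => B' (Fin.castLE hl j),
    ⟨hk, hl, A', B', hAB', fun i => rfl, fun j => rfl⟩,
    fun i => by rw [hrA, hA], fun j => by rw [hrB, hB]⟩
end

section
/- Let g ≥ 1 and let (a_1,…,a_k; b_1,…,b_ℓ) be a partial symplectic basis of ℤ^{2g}; set α_i = r(a_i) and β_j = r(b_j). Then the reduction homomorphism from {M ∈ Sp_{2g}(ℤ) : M a_i = a_i and M b_j = b_j for all 1 ≤ i ≤ k, 1 ≤ j ≤ ℓ} to {N ∈ Sp_{2g}(ℤ/2) : N α_i = α_i and N β_j = β_j for all 1 ≤ i ≤ k, 1 ≤ j ≤ ℓ} is surjective. -/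
open scoped BigOperators

/-! ### Auxiliary development -/

section Aux

variable {g : ℕ} {R : Type} [CommRing R]

lemma sF_add_left (v v' w : SV g R) :
    symplForm g R (v + v') w = symplForm g R v w + symplForm g R v' w := by
  unfold symplForm
  rw [← Finset.sum_add_distrib]
  exact Finset.sum_congr rfl fun i _ => by simp [Pi.add_apply]; ring

lemma sF_smul_left (r : R) (v w : SV g R) :
    symplForm g R (r • v) w = r * symplForm g R v w := by
  unfold symplForm
  rw [Finset.mul_sum]
  exact Finset.sum_congr rfl fun i _ => by simp [Pi.smul_apply, smul_eq_mul]; ring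

lemma sF_antisymm (v w : SV g R) : symplForm g R v w = - symplForm g R w v := by
  unfold symplForm
  rw [← Finset.sum_neg_distrib]
  exact Finset.sum_congr rfl fun i _ => by ring

lemma sF_self (v : SV g R) : symplForm g R v v = 0 := by
  unfold symplForm
  exact Finset.sum_eq_zero fun i _ => by ring

lemma sF_add_right (v w w' : SV g R) :
    symplForm g R v (w + w') = symplForm g R v w + symplForm g R v w' := by
  rw [sF_antisymm, sF_add_left, sF_antisymm v w, sF_antisymm v w']; ring

lemma sF_smul_right (r : R) (v w : SV g R) :
    symplForm g R v (r • w) = r * symplForm g R v w := by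
  rw [sF_antisymm, sF_smul_left, sF_antisymm v w]; ring

lemma sF_sub_right (v w w' : SV g R) :
    symplForm g R v (w - w') = symplForm g R v w - symplForm g R v w' := by
  have := sF_add_right v (w - w') w'
  simp at this
  linear_combination -this

lemma sF_sub_left (v v' w : SV g R) :
    symplForm g R (v - v') w = symplForm g R v w - symplForm g R v' w := by
  rw [sF_antisymm, sF_sub_right, sF_antisymm v w, sF_antisymm v' w]; ring

/-- The "left pairing" as a linear map. -/
def sFl (u : SV g R) : SV g R →ₗ[R] R where
  toFun v := symplForm g R v u
  map_add' v w := sF_add_left v w u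
  map_smul' r v := sF_smul_left r v u

/-- Symplectic transvection-type map: `v ↦ v + (ε * ω(v,u)) • u`. -/
def Tv (g : ℕ) (R : Type) [CommRing R] (u : SV g R) (ε : R) : SAut g R :=
  LinearEquiv.ofLinear
    (LinearMap.id + LinearMap.smulRight (ε • sFl u) u)
    (LinearMap.id - LinearMap.smulRight (ε • sFl u) u)
    (by
      apply LinearMap.ext; intro v
      have h : sFl u (v - (ε * sFl u v) • u) = sFl u v := by
        simp only [sFl, LinearMap.coe_mk, AddHom.coe_mk]
        rw [sub_eq_add_neg, sF_add_left, ← neg_smul, sF_smul_left, sF_self]; ring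
      simp only [LinearMap.comp_apply, LinearMap.add_apply, LinearMap.sub_apply,
        LinearMap.id_apply, LinearMap.smulRight_apply, LinearMap.smul_apply, smul_eq_mul]
      rw [h]; abel)
    (by
      apply LinearMap.ext; intro v
      have h : sFl u (v + (ε * sFl u v) • u) = sFl u v := by
        simp only [sFl, LinearMap.coe_mk, AddHom.coe_mk]
        rw [sF_add_left, sF_smul_left, sF_self]; ring
      simp only [LinearMap.comp_apply, LinearMap.add_apply, LinearMap.sub_apply,
        LinearMap.id_apply, LinearMap.smulRight_apply, LinearMap.smul_apply, smul_eq_mul]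
      rw [h]; abel)

lemma Tv_apply (u : SV g R) (ε : R) (v : SV g R) :
    Tv g R u ε v = v + (ε * symplForm g R v u) • u := rfl

lemma Tv_mem_Sp (u : SV g R) (ε : R) : Tv g R u ε ∈ Sp g R := by
  intro v w
  rw [Tv_apply, Tv_apply, sF_add_left, sF_add_right, sF_add_right, sF_smul_left,
    sF_smul_left, sF_smul_right, sF_smul_right, sF_self, sF_antisymm u w]
  ring

/-- standard basis vector -/
def ee (g : ℕ) (R : Type) [CommRing R] (q : Fin (2*g)) : SV g R := Pi.single q 1

/-- partner index -/
def prt {g : ℕ} (q : Fin (2*g)) : Fin (2*g) :=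
  if h : (q:ℕ) < g then ⟨g + q, by omega⟩ else ⟨(q:ℕ) - g, by have := q.isLt; omega⟩

lemma sF_single_left_lt (q : Fin (2*g)) (hq : (q:ℕ) < g) (w : SV g R) :
    symplForm g R (ee g R q) w = w (prt q) := by
  unfold symplForm ee prt
  rw [dif_pos hq]
  rw [Finset.sum_eq_single (⟨(q:ℕ), hq⟩ : Fin g)]
  · have h1 : (⟨(q:ℕ), by omega⟩ : Fin (2*g)) = q := by ext; simp
    have h2 : (⟨g + (q:ℕ), by omega⟩ : Fin (2*g)) ≠ q := by
      intro h; have := congrArg Fin.val h; simp at this; omega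
    rw [h1, Pi.single_apply, if_pos rfl, Pi.single_apply, if_neg h2]
    ring
  · intro i _ hi
    have h1 : (⟨(i:ℕ), by omega⟩ : Fin (2*g)) ≠ q := by
      intro h; have := congrArg Fin.val h; simp at this
      apply hi; ext; simpa using this
    have h2 : (⟨g + (i:ℕ), by omega⟩ : Fin (2*g)) ≠ q := by
      intro h; have := congrArg Fin.val h; simp at this; omega
    rw [Pi.single_apply, if_neg h1, Pi.single_apply, if_neg h2]
    ring
  · intro h; exact absurd (Finset.mem_univ _) h

lemma sF_single_left_ge (q : Fin (2*g)) (hq : g ≤ (q:ℕ)) (w : SV g R) :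
    symplForm g R (ee g R q) w = - w (prt q) := by
  unfold symplForm ee prt
  rw [dif_neg (by omega)]
  rw [Finset.sum_eq_single (⟨(q:ℕ) - g, by have := q.isLt; omega⟩ : Fin g)]
  · have h1 : (⟨(q:ℕ) - g, by have := q.isLt; omega⟩ : Fin (2*g)) ≠ q := by
      intro h; have := congrArg Fin.val h; simp at this; omega
    have h2 : (⟨g + ((q:ℕ) - g), by have := q.isLt; omega⟩ : Fin (2*g)) = q := by
      ext; simp; omega
    rw [Pi.single_apply, if_neg h1, h2, Pi.single_apply, if_pos rfl]
    ring
  · intro i _ hi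
    have h1 : (⟨(i:ℕ), by omega⟩ : Fin (2*g)) ≠ q := by
      intro h; have := congrArg Fin.val h; simp at this; omega
    have h2 : (⟨g + (i:ℕ), by omega⟩ : Fin (2*g)) ≠ q := by
      intro h; have := congrArg Fin.val h; simp at this
      apply hi; ext; simp; omega
    rw [Pi.single_apply, if_neg h1, Pi.single_apply, if_neg h2]
    ring
  · intro h; exact absurd (Finset.mem_univ _) h

lemma prt_val (q : Fin (2*g)) :
    ((prt q : Fin (2*g)) : ℕ) = if (q:ℕ) < g then g + q else (q:ℕ) - g := by
  unfold prt; split <;> simp_all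

lemma prt_prt (q : Fin (2*g)) : prt (prt q) = q := by
  have h := q.isLt
  ext
  rw [prt_val, prt_val]
  split <;> split <;> omega

lemma prt_lt_iff (q : Fin (2*g)) : ((prt q : Fin (2*g)) : ℕ) < g ↔ ¬ ((q:ℕ) < g) := by
  have h := q.isLt
  rw [prt_val]
  split <;> constructor <;> intro <;> omega

lemma prt_ne (q : Fin (2*g)) : prt q ≠ q := by
  intro h
  have := congrArg Fin.val h
  rw [prt_val] at this
  have h2 := q.isLt
  split at this <;> omega

lemma prt_inj {q r : Fin (2*g)} (h : prt q = prt r) : q = r := by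
  have := congrArg prt h
  rwa [prt_prt, prt_prt] at this

lemma ee_apply (q j : Fin (2*g)) : ee g R q j = if j = q then 1 else 0 := by
  simp [ee, Pi.single_apply]

lemma sF_single_single (q r : Fin (2*g)) (hqr : prt q ≠ r) :
    symplForm g R (ee g R q) (ee g R r) = 0 := by
  by_cases hq : (q:ℕ) < g
  · rw [sF_single_left_lt q hq, ee_apply, if_neg (fun h => hqr h)]
  · rw [sF_single_left_ge q (by omega), ee_apply, if_neg (fun h => hqr h)]
    simp

end Aux


section Aux2

variable {g : ℕ} {R : Type} [CommRing R]

lemma sF_zero_right (v : SV g R) : symplForm g R v 0 = 0 := by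
  unfold symplForm
  exact Finset.sum_eq_zero fun i _ => by simp

/-- sign of a standard index -/
def ssgn (g : ℕ) (R : Type) [CommRing R] (q : Fin (2*g)) : R :=
  if (q:ℕ) < g then 1 else -1

lemma sF_single_left' (q : Fin (2*g)) (w : SV g R) :
    symplForm g R (ee g R q) w = ssgn g R q * w (prt q) := by
  unfold ssgn
  by_cases hq : (q:ℕ) < g
  · rw [if_pos hq, sF_single_left_lt q hq, one_mul]
  · rw [if_neg hq, sF_single_left_ge q (by omega), neg_one_mul]

lemma ssgn_mul_self (q : Fin (2*g)) : ssgn g R q * ssgn g R q = 1 := by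
  unfold ssgn; split <;> ring

lemma sF_ee_ee (q r : Fin (2*g)) :
    symplForm g R (ee g R q) (ee g R r) = if prt q = r then ssgn g R q else 0 := by
  rw [sF_single_left', ee_apply]
  split <;> ring

lemma vec_eq_sum (w : SV g R) : ∑ m : Fin (2*g), w m • ee g R m = w := by
  funext j
  rw [Finset.sum_apply]
  rw [Finset.sum_eq_single j]
  · rw [Pi.smul_apply, ee_apply, if_pos rfl, smul_eq_mul, mul_one]
  · intro m _ hm
    rw [Pi.smul_apply, ee_apply, if_neg (fun h => hm h.symm), smul_zero]
  · intro h; exact absurd (Finset.mem_univ _) h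

end Aux2

section RMap

variable {g : ℕ}

def lift01 (g : ℕ) (c : SV g (ZMod 2)) : SV g ℤ := fun q => ((c q).val : ℤ)

lemma rMap_lift01 (c : SV g (ZMod 2)) : rMap g (lift01 g c) = c := by
  funext q; simp [rMap, lift01, ZMod.natCast_val, ZMod.cast_id]

lemma lift01_01 (c : SV g (ZMod 2)) (q : Fin (2*g)) :
    lift01 g c q = 0 ∨ lift01 g c q = 1 := by
  have := ZMod.val_lt (c q)
  unfold lift01
  omega

lemma rMap_smul (n : ℤ) (v : SV g ℤ) : rMap g (n • v) = (n : ZMod 2) • rMap g v := by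
  funext q; simp [rMap]

lemma rMap_single (q : Fin (2*g)) : rMap g (ee g ℤ q) = ee g (ZMod 2) q := by
  funext j
  simp [rMap, ee, Pi.single_apply]

lemma sF_rMap (v w : SV g ℤ) :
    symplForm g (ZMod 2) (rMap g v) (rMap g w) = ((symplForm g ℤ v w : ℤ) : ZMod 2) := by
  unfold symplForm rMap
  push_cast
  rfl

lemma int01_eq (x y : ℤ) (hx : x = 0 ∨ x = 1) (hy : y = 0 ∨ y = 1)
    (h : (x : ZMod 2) = (y : ZMod 2)) : x = y := by
  rcases hx with hx | hx <;> rcases hy with hy | hy <;> subst hx <;> subst hy <;>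
    first | rfl | (exfalso; revert h; decide)

lemma rMap_congr (L : SV g ℤ →ₗ[ℤ] SV g ℤ) {x y : SV g ℤ} (h : rMap g x = rMap g y) :
    rMap g (L x) = rMap g (L y) := by
  have hdvd : ∀ q, 2 ∣ (x q - y q) := by
    intro q
    have hq : ((x q : ℤ) : ZMod 2) = ((y q : ℤ) : ZMod 2) := congrFun h q
    rw [ZMod.intCast_eq_intCast_iff] at hq
    have := hq.dvd
    omega
  set z : SV g ℤ := fun q => (x q - y q) / 2 with hz
  have hxy : x = y + (2 : ℤ) • z := by
    funext q
    have := hdvd q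
    simp [hz, Pi.add_apply, Pi.smul_apply, smul_eq_mul]
    omega
  rw [hxy, map_add, map_smul]
  funext q
  simp only [rMap, Pi.add_apply, Pi.smul_apply, smul_eq_mul]
  push_cast
  rw [show (2 : ZMod 2) = 0 by decide]
  ring

/-- Reduction of an integral linear map mod 2. -/
def redL (L : SV g ℤ →ₗ[ℤ] SV g ℤ) : SV g (ZMod 2) →ₗ[ZMod 2] SV g (ZMod 2) where
  toFun c := rMap g (L (lift01 g c))
  map_add' c c' := by
    have h : rMap g (lift01 g (c + c')) = rMap g (lift01 g c + lift01 g c') := by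
      rw [rMap_lift01]
      funext q
      simp [rMap, lift01, Pi.add_apply, ZMod.natCast_val, ZMod.cast_id]
    show rMap g (L (lift01 g (c + c'))) = _
    rw [rMap_congr L h, map_add]
    funext q; simp [rMap, Pi.add_apply]
  map_smul' r c := by
    have h : rMap g (lift01 g (r • c)) = rMap g (((r.val : ℤ)) • lift01 g c) := by
      rw [rMap_lift01, rMap_smul, rMap_lift01]
      have : (((r.val : ℤ)) : ZMod 2) = r := by
        simp [ZMod.natCast_val, ZMod.cast_id]
      rw [this]
    show rMap g (L (lift01 g (r • c))) = _
    rw [rMap_congr L h, map_smul, rMap_smul]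
    simp [ZMod.natCast_val, ZMod.cast_id]

lemma redL_comm (L : SV g ℤ →ₗ[ℤ] SV g ℤ) (v : SV g ℤ) :
    rMap g (L v) = redL L (rMap g v) := by
  show _ = rMap g (L (lift01 g (rMap g v)))
  exact rMap_congr L (rMap_lift01 (rMap g v)).symm

/-- Reduction of an integral automorphism mod 2. -/
def redE (M : SAut g ℤ) : SAut g (ZMod 2) :=
  LinearEquiv.ofLinear (redL M.toLinearMap) (redL M.symm.toLinearMap)
    (by
      apply LinearMap.ext; intro c
      have h1 := (redL_comm M.symm.toLinearMap (lift01 g c)).symm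
      have h2 := (redL_comm M.toLinearMap (M.symm.toLinearMap (lift01 g c))).symm
      simp only [LinearMap.comp_apply, LinearMap.id_apply]
      rw [← rMap_lift01 c, h1, h2]
      simp)
    (by
      apply LinearMap.ext; intro c
      have h1 := (redL_comm M.toLinearMap (lift01 g c)).symm
      have h2 := (redL_comm M.symm.toLinearMap (M.toLinearMap (lift01 g c))).symm
      simp only [LinearMap.comp_apply, LinearMap.id_apply]
      rw [← rMap_lift01 c, h1, h2]
      simp)

lemma redE_comm (M : SAut g ℤ) (v : SV g ℤ) :
    rMap g (M v) = redE M (rMap g v) := redL_comm M.toLinearMap v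

lemma redE_symm_comm (M : SAut g ℤ) (v : SV g ℤ) :
    rMap g (M.symm v) = (redE M).symm (rMap g v) := by
  apply (redE M).injective
  rw [← redE_comm, LinearEquiv.apply_symm_apply, LinearEquiv.apply_symm_apply]

lemma rMap_surjective : Function.Surjective (rMap g) :=
  fun c => ⟨lift01 g c, rMap_lift01 c⟩

lemma redE_mem_Sp {M : SAut g ℤ} (hM : M ∈ Sp g ℤ) : redE M ∈ Sp g (ZMod 2) := by
  intro v w
  obtain ⟨x, rfl⟩ := rMap_surjective (g := g) v
  obtain ⟨y, rfl⟩ := rMap_surjective (g := g) w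
  rw [← redE_comm, ← redE_comm, sF_rMap, sF_rMap, hM]

end RMap

section Mover

variable {g : ℕ}

lemma mover_core (F : Fin (2*g) → Prop) (p : Fin (2*g)) (b v : SV g ℤ) (ε₁ ε₂ : ℤ)
    (hA1 : ∀ q, F q → symplForm g ℤ (ee g ℤ q) (v - ee g ℤ p) = 0)
    (hA2 : ∀ q, F q → symplForm g ℤ (ee g ℤ q) (b - v) = 0)
    (hB : (ε₁ * symplForm g ℤ (ee g ℤ p) (v - ee g ℤ p)) • (v - ee g ℤ p) = v - ee g ℤ p)
    (hC : (ε₂ * symplForm g ℤ v (b - v)) • (b - v) = b - v) :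
    ∃ M : SAut g ℤ, M ∈ Sp g ℤ ∧ (∀ q, F q → M (ee g ℤ q) = ee g ℤ q) ∧
      M (ee g ℤ p) = b := by
  refine ⟨Tv g ℤ (b - v) ε₂ * Tv g ℤ (v - ee g ℤ p) ε₁,
    mul_mem (Tv_mem_Sp _ _) (Tv_mem_Sp _ _), ?_, ?_⟩
  · intro q hq
    show Tv g ℤ (b - v) ε₂ (Tv g ℤ (v - ee g ℤ p) ε₁ (ee g ℤ q)) = _
    rw [Tv_apply (v - ee g ℤ p) ε₁ (ee g ℤ q), hA1 q hq, mul_zero, zero_smul, add_zero,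
      Tv_apply, hA2 q hq, mul_zero, zero_smul, add_zero]
  · show Tv g ℤ (b - v) ε₂ (Tv g ℤ (v - ee g ℤ p) ε₁ (ee g ℤ p)) = b
    rw [Tv_apply (v - ee g ℤ p) ε₁ (ee g ℤ p), hB]
    rw [show ee g ℤ p + (v - ee g ℤ p) = v by abel, Tv_apply, hC]
    abel

lemma mover (F : Fin (2*g) → Prop) [DecidablePred F] (p : Fin (2*g)) (hp : ¬ F p)
    (N : SAut g (ZMod 2)) (hN : N ∈ Sp g (ZMod 2))
    (hfix : ∀ q, F q → N (ee g (ZMod 2) q) = ee g (ZMod 2) q) :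
    ∃ M : SAut g ℤ, M ∈ Sp g ℤ ∧ (∀ q, F q → M (ee g ℤ q) = ee g ℤ q) ∧
      rMap g (M (ee g ℤ p)) = N (ee g (ZMod 2) p) := by
  classical
  set c : SV g (ZMod 2) := N (ee g (ZMod 2) p) with hc
  set b : SV g ℤ := lift01 g c with hb
  have hrb : rMap g b = c := rMap_lift01 c
  have hb01 : ∀ j, b j = 0 ∨ b j = 1 := lift01_01 c
  have hbc : ∀ j, ((b j : ℤ) : ZMod 2) = c j := fun j => congrFun hrb j
  have hcoord : ∀ q, F q → b (prt q) = ee g ℤ p (prt q) := by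
    intro q hq
    have hmod : symplForm g (ZMod 2) (ee g (ZMod 2) q) c
        = symplForm g (ZMod 2) (ee g (ZMod 2) q) (ee g (ZMod 2) p) := by
      conv_lhs => rw [← hfix q hq, hc]
      exact hN _ _
    rw [sF_single_left', sF_single_left'] at hmod
    have hs : (ssgn g (ZMod 2) q) ≠ 0 := by unfold ssgn; split <;> decide
    have hc2 : c (prt q) = ee g (ZMod 2) p (prt q) := mul_left_cancel₀ hs hmod
    refine int01_eq _ _ (hb01 _) ?_ ?_
    · rw [ee_apply]; split <;> simp
    · rw [hbc, hc2]
      exact (congrFun (rMap_single p) (prt q)).symm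
  have hfixb : ∀ q, F q → symplForm g ℤ (ee g ℤ q) b = symplForm g ℤ (ee g ℤ q) (ee g ℤ p) := by
    intro q hq; rw [sF_single_left', sF_single_left', hcoord q hq]
  have hppF : F (prt p) → b p = 1 := by
    intro h
    have h2 := hcoord _ h
    rw [prt_prt] at h2
    rw [h2, ee_apply, if_pos rfl]
  rcases hb01 (prt p) with h0 | h1
  · -- b (prt p) = 0
    rcases hb01 p with hp0 | hp1
    · -- Case 3 : b p = 0 as well
      have hppF' : ¬ F (prt p) := by
        intro h
        have := hppF h
        rw [this] at hp0
        exact absurd hp0 (by norm_num)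
      have hm : ∃ m, ¬ F m ∧ m ≠ p ∧ m ≠ prt p ∧ b m = 1 := by
        by_contra hno
        push_neg at hno
        have hsupp : ∀ m, c m ≠ 0 → F m := by
          intro m hcm
          by_contra hFm
          have hbm : b m = 1 := by
            rcases hb01 m with h | h
            · exfalso; apply hcm; rw [← hbc m, h]; norm_num
            · exact h
          have hmp : m ≠ p := by
            intro e; rw [e, hp0] at hbm; exact absurd hbm (by norm_num)
          have hmpp : m ≠ prt p := by
            intro e; rw [e, h0] at hbm; exact absurd hbm (by norm_num)
          exact hno m hFm hmp hmpp hbm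
        have hNc : N c = c := by
          conv_lhs => rw [← vec_eq_sum c]
          rw [map_sum]
          have heach : ∀ m : Fin (2*g), m ∈ Finset.univ →
              N (c m • ee g (ZMod 2) m) = c m • ee g (ZMod 2) m := by
            intro m _
            rw [map_smul]
            by_cases hcm : c m = 0
            · rw [hcm, zero_smul, zero_smul]
            · rw [hfix m (hsupp m hcm)]
          rw [Finset.sum_congr rfl heach, vec_eq_sum]
        have hcp : c = ee g (ZMod 2) p := by
          apply N.injective
          rw [hNc, hc]
        have hone : c p = 1 := by rw [hcp, ee_apply, if_pos rfl]
        rw [← hbc p, hp0] at hone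
        revert hone
        push_cast
        decide
      obtain ⟨m, hFm, hmp, hmpp, hbm⟩ := hm
      have hprtmp : prt m ≠ prt p := fun e => hmp (prt_inj e)
      set v : SV g ℤ := ee g ℤ (prt p) + ee g ℤ (prt m) with hv
      have hqp : ∀ q, F q → prt q ≠ prt p := fun q hq e => hp (prt_inj e ▸ hq)
      have hqm : ∀ q, F q → prt q ≠ prt m := fun q hq e => hFm (prt_inj e ▸ hq)
      have hqpp : ∀ q, F q → prt q ≠ p := by
        intro q hq e
        apply hppF'
        have e2 : q = prt p := by rw [← e, prt_prt]
        exact e2 ▸ hq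
      have hA1 : ∀ q, F q → symplForm g ℤ (ee g ℤ q) (v - ee g ℤ p) = 0 := by
        intro q hq
        rw [sF_sub_right, sF_add_right, sF_ee_ee, sF_ee_ee, sF_ee_ee,
          if_neg (hqp q hq), if_neg (hqm q hq), if_neg (hqpp q hq)]
        ring
      have hA2 : ∀ q, F q → symplForm g ℤ (ee g ℤ q) (b - v) = 0 := by
        intro q hq
        rw [sF_sub_right, hfixb q hq, sF_add_right, sF_ee_ee, sF_ee_ee, sF_ee_ee,
          if_neg (hqp q hq), if_neg (hqm q hq), if_neg (hqpp q hq)]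
        ring
      have hB : (ssgn g ℤ p * symplForm g ℤ (ee g ℤ p) (v - ee g ℤ p)) • (v - ee g ℤ p)
          = v - ee g ℤ p := by
        rw [sF_sub_right, sF_add_right, sF_ee_ee, sF_ee_ee, sF_self,
          if_pos rfl, if_neg (fun e => hprtmp e.symm), add_zero, sub_zero,
          ssgn_mul_self, one_smul]
      have hC : (ssgn g ℤ (prt m) * symplForm g ℤ v (b - v)) • (b - v) = b - v := by
        rw [sF_sub_right, sF_self, sub_zero, sF_add_left, sF_single_left',
          sF_single_left', prt_prt, prt_prt, hp0, hbm, mul_zero, mul_one, zero_add,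
          ssgn_mul_self, one_smul]
      obtain ⟨M, h1', h2', h3'⟩ := mover_core F p b v (ssgn g ℤ p) (ssgn g ℤ (prt m))
        hA1 hA2 hB hC
      exact ⟨M, h1', h2', by rw [h3', hrb]⟩
    · -- Case 2 : b p = 1, b (prt p) = 0
      set v : SV g ℤ := ee g ℤ p + ee g ℤ (prt p) with hv
      have hqp : ∀ q, F q → prt q ≠ prt p := fun q hq e => hp (prt_inj e ▸ hq)
      have hA1 : ∀ q, F q → symplForm g ℤ (ee g ℤ q) (v - ee g ℤ p) = 0 := by
        intro q hq
        rw [sF_sub_right, sF_add_right, sF_ee_ee q (prt p), if_neg (hqp q hq)]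
        ring
      have hA2 : ∀ q, F q → symplForm g ℤ (ee g ℤ q) (b - v) = 0 := by
        intro q hq
        rw [sF_sub_right, hfixb q hq, sF_add_right, sF_ee_ee q (prt p),
          if_neg (hqp q hq)]
        ring
      have hB : (ssgn g ℤ p * symplForm g ℤ (ee g ℤ p) (v - ee g ℤ p)) • (v - ee g ℤ p)
          = v - ee g ℤ p := by
        rw [sF_sub_right, sF_add_right, sF_ee_ee p (prt p), if_pos rfl, sF_self,
          zero_add, sub_zero, ssgn_mul_self, one_smul]
      have hC : (ssgn g ℤ (prt p) * symplForm g ℤ v (b - v)) • (b - v) = b - v := by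
        rw [sF_sub_right, sF_self, sub_zero, sF_add_left, sF_single_left',
          sF_single_left', prt_prt, h0, hp1, mul_zero, mul_one, zero_add,
          ssgn_mul_self, one_smul]
      obtain ⟨M, h1', h2', h3'⟩ := mover_core F p b v (ssgn g ℤ p) (ssgn g ℤ (prt p))
        hA1 hA2 hB hC
      exact ⟨M, h1', h2', by rw [h3', hrb]⟩
  · -- Case 1 : b (prt p) = 1
    have hC : (ssgn g ℤ p * symplForm g ℤ (ee g ℤ p) (b - ee g ℤ p)) • (b - ee g ℤ p)
        = b - ee g ℤ p := by
      rw [sF_sub_right, sF_self, sub_zero, sF_single_left', h1, mul_one,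
        ssgn_mul_self, one_smul]
    obtain ⟨M, h1', h2', h3'⟩ := mover_core F p b (ee g ℤ p) 0 (ssgn g ℤ p)
      (fun q hq => by rw [sub_self, sF_zero_right])
      (fun q hq => by rw [sF_sub_right, hfixb q hq, sub_self])
      (by rw [sub_self, sF_zero_right, mul_zero, zero_smul])
      hC
    exact ⟨M, h1', h2', by rw [h3', hrb]⟩

end Mover


section MainStd

/-- the set of fixed standard indices -/
def FixP (g k l : ℕ) (q : Fin (2*g)) : Prop :=
  (q:ℕ) < k ∨ (g ≤ (q:ℕ) ∧ (q:ℕ) < g + l)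

instance (g k l : ℕ) : DecidablePred (FixP g k l) := fun _ => by
  unfold FixP; infer_instance

lemma main_std (g : ℕ) : ∀ (t k l : ℕ), k ≤ g → l ≤ g → (g - k) + (g - l) = t →
    ∀ N : SAut g (ZMod 2), N ∈ Sp g (ZMod 2) →
    (∀ q, FixP g k l q → N (ee g (ZMod 2) q) = ee g (ZMod 2) q) →
    ∃ M : SAut g ℤ, M ∈ Sp g ℤ ∧ (∀ q, FixP g k l q → M (ee g ℤ q) = ee g ℤ q) ∧
      ∀ v, rMap g (M v) = N (rMap g v) := by
  intro t
  induction t with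
  | zero =>
    intro k l hk hl ht N hN hfix
    refine ⟨1, (Sp g ℤ).one_mem, fun q _ => rfl, ?_⟩
    intro v
    have hNid : ∀ w, N w = w := by
      intro w
      conv_lhs => rw [← vec_eq_sum w]
      rw [map_sum]
      have heach : ∀ m : Fin (2*g), m ∈ Finset.univ →
          N (w m • ee g (ZMod 2) m) = w m • ee g (ZMod 2) m := by
        intro m _
        rw [map_smul, hfix m (by unfold FixP; have := m.isLt; omega)]
      rw [Finset.sum_congr rfl heach, vec_eq_sum]
    rw [hNid]
    rfl
  | succ t ih =>
    intro k l hk hl ht N hN hfix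
    have happZ : ∀ (A B : SAut g ℤ) w, (A * B) w = A (B w) := fun _ _ _ => rfl
    have happ2 : ∀ (A B : SAut g (ZMod 2)) w, (A * B) w = A (B w) := fun _ _ _ => rfl
    have hinvapp : ∀ (A : SAut g (ZMod 2)) w, (A⁻¹ : SAut g (ZMod 2)) w = A.symm w :=
      fun _ _ => rfl
    by_cases hkg : k < g
    · -- extend the a-side at index k
      set p : Fin (2*g) := ⟨k, by omega⟩ with hpdef
      have hpF : ¬ FixP g k l p := by
        unfold FixP
        simp only [hpdef]
        omega
      obtain ⟨M₁, hM₁Sp, hM₁fix, hM₁p⟩ := mover (FixP g k l) p hpF N hN hfix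
      set N' : SAut g (ZMod 2) := (redE M₁)⁻¹ * N with hN'def
      have hN'Sp : N' ∈ Sp g (ZMod 2) :=
        mul_mem (inv_mem (redE_mem_Sp hM₁Sp)) hN
      have hsplit : ∀ q : Fin (2*g), FixP g (k+1) l q → FixP g k l q ∨ q = p := by
        intro q hq
        unfold FixP at hq ⊢
        by_cases h : (q:ℕ) = k
        · right; exact Fin.ext h
        · left; omega
      have hfix' : ∀ q, FixP g (k+1) l q → N' (ee g (ZMod 2) q) = ee g (ZMod 2) q := by
        intro q hq
        rcases hsplit q hq with h | rfl
        · rw [hN'def, happ2, hfix q h, hinvapp]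
          have : redE M₁ (ee g (ZMod 2) q) = ee g (ZMod 2) q := by
            rw [← rMap_single, ← redE_comm, hM₁fix q h]
          rw [← this, LinearEquiv.symm_apply_apply, this]
        · rw [hN'def, happ2, hinvapp]
          rw [← hM₁p, ← rMap_single, redE_comm]
          rw [LinearEquiv.symm_apply_apply, rMap_single]
      obtain ⟨M', hM'Sp, hM'fix, hM'r⟩ :=
        ih (k+1) l (by omega) hl (by omega) N' hN'Sp hfix'
      refine ⟨M₁ * M', mul_mem hM₁Sp hM'Sp, ?_, ?_⟩
      · intro q hq
        rw [happZ, hM'fix q (by unfold FixP at hq ⊢; omega), hM₁fix q hq]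
      · intro v
        rw [happZ, redE_comm, hM'r v, hN'def, happ2, hinvapp,
          LinearEquiv.apply_symm_apply]
    · -- extend the b-side at index g + l
      have hlg : l < g := by omega
      set p : Fin (2*g) := ⟨g + l, by omega⟩ with hpdef
      have hpF : ¬ FixP g k l p := by
        unfold FixP
        simp only [hpdef]
        omega
      obtain ⟨M₁, hM₁Sp, hM₁fix, hM₁p⟩ := mover (FixP g k l) p hpF N hN hfix
      set N' : SAut g (ZMod 2) := (redE M₁)⁻¹ * N with hN'def
      have hN'Sp : N' ∈ Sp g (ZMod 2) :=
        mul_mem (inv_mem (redE_mem_Sp hM₁Sp)) hN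
      have hsplit : ∀ q : Fin (2*g), FixP g k (l+1) q → FixP g k l q ∨ q = p := by
        intro q hq
        unfold FixP at hq ⊢
        by_cases h : (q:ℕ) = g + l
        · right; exact Fin.ext h
        · left; omega
      have hfix' : ∀ q, FixP g k (l+1) q → N' (ee g (ZMod 2) q) = ee g (ZMod 2) q := by
        intro q hq
        rcases hsplit q hq with h | rfl
        · rw [hN'def, happ2, hfix q h, hinvapp]
          have : redE M₁ (ee g (ZMod 2) q) = ee g (ZMod 2) q := by
            rw [← rMap_single, ← redE_comm, hM₁fix q h]
          rw [← this, LinearEquiv.symm_apply_apply, this]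
        · rw [hN'def, happ2, hinvapp]
          rw [← hM₁p, ← rMap_single, redE_comm]
          rw [LinearEquiv.symm_apply_apply, rMap_single]
      obtain ⟨M', hM'Sp, hM'fix, hM'r⟩ :=
        ih k (l+1) hk (by omega) (by omega) N' hN'Sp hfix'
      refine ⟨M₁ * M', mul_mem hM₁Sp hM'Sp, ?_, ?_⟩
      · intro q hq
        rw [happZ, hM'fix q (by unfold FixP at hq ⊢; omega), hM₁fix q hq]
      · intro v
        rw [happZ, redE_comm, hM'r v, hN'def, happ2, hinvapp,
          LinearEquiv.apply_symm_apply]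

end MainStd


section BasisChange

variable {g : ℕ} {R : Type} [CommRing R]

/-- The "right pairing" as a linear map. -/
def sFr (u : SV g R) : SV g R →ₗ[R] R where
  toFun w := symplForm g R u w
  map_add' v w := sF_add_right u v w
  map_smul' r v := sF_smul_right r u v

lemma sF_sum_left {ι : Type*} (s : Finset ι) (f : ι → SV g R) (w : SV g R) :
    symplForm g R (∑ i ∈ s, f i) w = ∑ i ∈ s, symplForm g R (f i) w :=
  map_sum (sFl w) f s

lemma sF_sum_right {ι : Type*} (s : Finset ι) (f : ι → SV g R) (w : SV g R) :
    symplForm g R w (∑ i ∈ s, f i) = ∑ i ∈ s, symplForm g R w (f i) :=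
  map_sum (sFr w) f s

lemma mem_Sp_of_basis (T : SAut g R)
    (h : ∀ q r, symplForm g R (T (ee g R q)) (T (ee g R r))
        = symplForm g R (ee g R q) (ee g R r)) : T ∈ Sp g R := by
  intro v w
  have hv : T v = ∑ q : Fin (2*g), v q • T (ee g R q) := by
    conv_lhs => rw [← vec_eq_sum v]
    rw [map_sum]
    exact Finset.sum_congr rfl fun q _ => map_smul _ _ _
  have hw : T w = ∑ r : Fin (2*g), w r • T (ee g R r) := by
    conv_lhs => rw [← vec_eq_sum w]
    rw [map_sum]
    exact Finset.sum_congr rfl fun r _ => map_smul _ _ _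
  rw [hv, hw, sF_sum_left]
  conv_rhs => rw [← vec_eq_sum v, ← vec_eq_sum w, sF_sum_left]
  refine Finset.sum_congr rfl fun q _ => ?_
  rw [sF_smul_left, sF_sum_right, sF_smul_left, sF_sum_right, Finset.mul_sum,
    Finset.mul_sum]
  refine Finset.sum_congr rfl fun r _ => ?_
  rw [sF_smul_right, sF_smul_right, h q r]

/-- index identification `Fin g ⊕ Fin g ≃ Fin (2g)` -/
def sumE (g : ℕ) : (Fin g ⊕ Fin g) ≃ Fin (2*g) where
  toFun x := match x with
    | .inl i => ⟨(i : ℕ), by have := i.isLt; omega⟩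
    | .inr i => ⟨g + (i : ℕ), by have := i.isLt; omega⟩
  invFun q := if h : (q:ℕ) < g then .inl ⟨(q:ℕ), h⟩
    else .inr ⟨(q:ℕ) - g, by have := q.isLt; omega⟩
  left_inv := by
    rintro (i | i)
    · have hi := i.isLt
      dsimp only
      rw [dif_pos hi]
    · have hi := i.isLt
      dsimp only
      rw [dif_neg (by omega)]
      congr 1
      ext
      show g + (i:ℕ) - g = (i:ℕ)
      omega
  right_inv := by
    intro q
    have hq := q.isLt
    by_cases h : (q:ℕ) < g
    · dsimp only
      rw [dif_pos h]
    · dsimp only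
      rw [dif_neg h]
      ext
      show g + ((q:ℕ) - g) = (q:ℕ)
      omega

lemma sumE_symm_lt (q : Fin (2*g)) (h : (q:ℕ) < g) :
    (sumE g).symm q = Sum.inl ⟨(q:ℕ), h⟩ := dif_pos h

lemma sumE_symm_ge (q : Fin (2*g)) (h : ¬ (q:ℕ) < g) :
    (sumE g).symm q = Sum.inr ⟨(q:ℕ) - g, by have := q.isLt; omega⟩ := dif_neg h

end BasisChange

/-- The reduction map between the stabilizer of a partial symplectic basis of
`ℤ^{2g}` in `Sp_{2g}(ℤ)` and the stabilizer of its mod-2 reduction in `Sp_{2g}(ℤ/2)`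
is surjective. -/
theorem stabilizer_reduction_surjective (g : ℕ) (hg : 1 ≤ g) (k l : ℕ)
    (a : Fin k → SV g ℤ) (b : Fin l → SV g ℤ)
    (hab : IsPartialSymplBasis g ℤ a b) :
    ∀ N : SAut g (ZMod 2), N ∈ Sp g (ZMod 2) →
      (∀ i, N (rMap g (a i)) = rMap g (a i)) → (∀ j, N (rMap g (b j)) = rMap g (b j)) →
      ∃ M : SAut g ℤ, M ∈ Sp g ℤ ∧
        (∀ i, M (a i) = a i) ∧ (∀ j, M (b j) = b j) ∧
        (∀ v, rMap g (M v) = N (rMap g v)) := by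
  intro N hN hNa hNb
  classical
  obtain ⟨hk, hl, A, Bv, ⟨⟨Bas, hBl, hBr⟩, hAA, hBB, hAB⟩, hA, hBv⟩ := hab
  set T : SAut g ℤ := (Pi.basisFun ℤ (Fin (2*g))).equiv Bas (sumE g).symm with hTdef
  have hTe : ∀ q : Fin (2*g), T (ee g ℤ q) = Bas ((sumE g).symm q) := by
    intro q
    rw [show ee g ℤ q = Pi.basisFun ℤ (Fin (2*g)) q by rw [Pi.basisFun_apply]; rfl,
      hTdef]
    apply Module.Basis.equiv_apply
  -- T is symplectic
  have hTSp : T ∈ Sp g ℤ := by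
    apply mem_Sp_of_basis
    intro q r
    by_cases hq : (q:ℕ) < g <;> by_cases hr : (r:ℕ) < g
    · rw [hTe, hTe, sumE_symm_lt q hq, sumE_symm_lt r hr, hBl, hBl, hAA,
        sF_ee_ee, if_neg]
      intro e
      have := congrArg Fin.val e
      rw [prt_val, if_pos hq] at this
      omega
    · rw [hTe, hTe, sumE_symm_lt q hq, sumE_symm_ge r hr, hBl, hBr, hAB,
        sF_ee_ee]
      unfold ssgn
      simp only [Fin.mk.injEq, Fin.ext_iff, prt_val]
      rw [if_pos hq, if_pos hq]
      have hr2 := r.isLt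
      by_cases hqr : g + (q:ℕ) = (r:ℕ)
      · rw [if_pos (by omega), if_pos (by omega)]
      · rw [if_neg (by omega), if_neg (by omega)]
    · rw [hTe, hTe, sumE_symm_ge q hq, sumE_symm_lt r hr, hBl, hBr,
        sF_antisymm, hAB, sF_ee_ee]
      unfold ssgn
      simp only [Fin.mk.injEq, Fin.ext_iff, prt_val]
      rw [if_neg hq, if_neg hq]
      have hq2 := q.isLt
      by_cases hqr : (q:ℕ) - g = (r:ℕ)
      · rw [if_pos (by omega), if_pos (by omega)]
      · rw [if_neg (by omega), if_neg (by omega)]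
        ring
    · rw [hTe, hTe, sumE_symm_ge q hq, sumE_symm_ge r hr, hBr, hBr, hBB,
        sF_ee_ee, if_neg]
      intro e
      have := congrArg Fin.val e
      rw [prt_val, if_neg hq] at this
      have := q.isLt
      omega
  have hTbarSp : redE T ∈ Sp g (ZMod 2) := redE_mem_Sp hTSp
  set N' : SAut g (ZMod 2) := (redE T)⁻¹ * N * redE T with hN'def
  have hN'app : ∀ w, N' w = (redE T).symm (N (redE T w)) := fun _ => rfl
  have hN'Sp : N' ∈ Sp g (ZMod 2) :=
    mul_mem (mul_mem (inv_mem hTbarSp) hN) hTbarSp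
  have hTbar_e : ∀ q : Fin (2*g),
      redE T (ee g (ZMod 2) q) = rMap g (T (ee g ℤ q)) := by
    intro q
    rw [← rMap_single, ← redE_comm]
  have hfix' : ∀ q, FixP g k l q →
      N' (ee g (ZMod 2) q) = ee g (ZMod 2) q := by
    intro q hq
    rcases hq with hqk | ⟨hqg, hql⟩
    · have h1 : T (ee g ℤ q) = a ⟨(q:ℕ), hqk⟩ := by
        rw [hTe, sumE_symm_lt q (by omega), hBl]
        exact hA ⟨(q:ℕ), hqk⟩
      rw [hN'app, hTbar_e, h1, hNa ⟨(q:ℕ), hqk⟩, ← h1, ← hTbar_e,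
        LinearEquiv.symm_apply_apply]
    · have hj : (q:ℕ) - g < l := by omega
      have h1 : T (ee g ℤ q) = b ⟨(q:ℕ) - g, hj⟩ := by
        rw [hTe, sumE_symm_ge q (by omega), hBr]
        exact hBv ⟨(q:ℕ) - g, hj⟩
      rw [hN'app, hTbar_e, h1, hNb ⟨(q:ℕ) - g, hj⟩, ← h1, ← hTbar_e,
        LinearEquiv.symm_apply_apply]
  obtain ⟨M', hM'Sp, hM'fix, hM'r⟩ :=
    main_std g ((g - k) + (g - l)) k l hk hl rfl N' hN'Sp hfix'
  refine ⟨T * M' * T⁻¹, mul_mem (mul_mem hTSp hM'Sp) (inv_mem hTSp), ?_, ?_, ?_⟩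
  · intro i
    have hi2 : (i:ℕ) < 2*g := by have := i.isLt; omega
    have h1 : T (ee g ℤ ⟨(i:ℕ), hi2⟩) = a i := by
      rw [hTe, sumE_symm_lt ⟨(i:ℕ), hi2⟩ (by show (i:ℕ) < g; have := i.isLt; omega), hBl]
      exact hA i
    show T (M' (T.symm (a i))) = a i
    rw [← h1, LinearEquiv.symm_apply_apply,
      hM'fix _ (Or.inl (by show (i:ℕ) < k; exact i.isLt)), h1]
  · intro j
    have hj2 : g + (j:ℕ) < 2*g := by have := j.isLt; omega
    have h1 : T (ee g ℤ ⟨g + (j:ℕ), hj2⟩) = b j := by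
      rw [hTe, sumE_symm_ge ⟨g + (j:ℕ), hj2⟩ (by show ¬ g + (j:ℕ) < g; omega), hBr]
      convert hBv j using 2
      ext
      show g + (j:ℕ) - g = (j:ℕ)
      omega
    show T (M' (T.symm (b j))) = b j
    rw [← h1, LinearEquiv.symm_apply_apply,
      hM'fix _ (Or.inr ⟨by show g ≤ g + (j:ℕ); omega,
        by show g + (j:ℕ) < g + l; have := j.isLt; omega⟩), h1]
  · intro v
    show rMap g (T (M' (T.symm v))) = N (rMap g v)
    rw [redE_comm, hM'r, redE_symm_comm, hN'app,
      LinearEquiv.apply_symm_apply, LinearEquiv.apply_symm_apply]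
end

section
/- Every subset S of (ℤ/2)^n ∖ {0} with |S| ≤ 4 has one of the following forms: ∅, {v_1}, {v_1, v_2}, {v_1, v_2, v_3}, {v_1, v_2, v_1+v_2}, {v_1, v_2, v_3, v_4}, {v_1, v_2, v_3, v_1+v_2}, or {v_1, v_2, v_3, v_1+v_2+v_3}, where in each case v_1, v_2, … are linearly independent vectors in (ℤ/2)^n. -/
section Helpers

lemma zmod2_cases' (a : ZMod 2) : a = 0 ∨ a = 1 := by
  revert a; decide

variable {M : Type*} [AddCommGroup M] [Module (ZMod 2) M]

lemma add2_eq' (x y : M) (h : x + y = 0) : x = y := by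
  have h2 : y + y = 0 := by
    have h20 : (2 : ZMod 2) = 0 := rfl
    calc y + y = (2 : ZMod 2) • y := (two_smul _ y).symm
      _ = 0 := by rw [h20, zero_smul]
  calc x = x + (y + y) := by rw [h2, add_zero]
    _ = (x + y) + y := by abel
    _ = y := by rw [h, zero_add]

lemma add2_ne' (x y : M) (h : x ≠ y) : x + y ≠ 0 := fun h0 => h (add2_eq' x y h0)

lemma li1' (a : M) (ha : a ≠ 0) : LinearIndependent (ZMod 2) ![a] := by
  rw [Fintype.linearIndependent_iff]
  intro g hg
  rw [Fin.sum_univ_one] at hg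
  simp only [Matrix.cons_val_zero] at hg
  rcases zmod2_cases' (g 0) with h0 | h0 <;>
  simp only [h0, zero_smul, one_smul] at hg <;>
  first
    | exact absurd hg (by assumption)
    | (intro i; fin_cases i <;> simp [h0])

lemma li2' (a b : M) (ha : a ≠ 0) (hb : b ≠ 0) (hab : a + b ≠ 0) :
    LinearIndependent (ZMod 2) ![a, b] := by
  rw [Fintype.linearIndependent_iff]
  intro g hg
  rw [Fin.sum_univ_two] at hg
  simp only [Matrix.cons_val_zero, Matrix.cons_val_one, Matrix.head_cons] at hg
  rcases zmod2_cases' (g 0) with h0 | h0 <;>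
  rcases zmod2_cases' (g 1) with h1 | h1 <;>
  simp only [h0, h1, zero_smul, one_smul, zero_add, add_zero] at hg <;>
  first
    | exact absurd hg (by assumption)
    | (intro i; fin_cases i <;> simp [h0, h1])

lemma li3' (a b c : M) (ha : a ≠ 0) (hb : b ≠ 0) (hc : c ≠ 0)
    (hab : a + b ≠ 0) (hac : a + c ≠ 0) (hbc : b + c ≠ 0)
    (habc : a + b + c ≠ 0) :
    LinearIndependent (ZMod 2) ![a, b, c] := by
  rw [Fintype.linearIndependent_iff]
  intro g hg
  rw [Fin.sum_univ_three] at hg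
  simp only [Matrix.cons_val_zero, Matrix.cons_val_one, Matrix.head_cons,
    Matrix.cons_val_two, Matrix.tail_cons] at hg
  rcases zmod2_cases' (g 0) with h0 | h0 <;>
  rcases zmod2_cases' (g 1) with h1 | h1 <;>
  rcases zmod2_cases' (g 2) with h2 | h2 <;>
  simp only [h0, h1, h2, zero_smul, one_smul, zero_add, add_zero] at hg <;>
  first
    | exact absurd hg (by assumption)
    | (intro i; fin_cases i <;> simp [h0, h1, h2])

lemma li4' (a b c d : M)
    (ha : a ≠ 0) (hb : b ≠ 0) (hc : c ≠ 0) (hd : d ≠ 0)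
    (hab : a + b ≠ 0) (hac : a + c ≠ 0) (had : a + d ≠ 0)
    (hbc : b + c ≠ 0) (hbd : b + d ≠ 0) (hcd : c + d ≠ 0)
    (habc : a + b + c ≠ 0) (habd : a + b + d ≠ 0)
    (hacd : a + c + d ≠ 0) (hbcd : b + c + d ≠ 0)
    (habcd : a + b + c + d ≠ 0) :
    LinearIndependent (ZMod 2) ![a, b, c, d] := by
  rw [Fintype.linearIndependent_iff]
  intro g hg
  rw [Fin.sum_univ_four] at hg
  simp only [Matrix.cons_val_zero, Matrix.cons_val_one, Matrix.head_cons,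
    Matrix.cons_val_two, Matrix.tail_cons, Matrix.cons_val_three,
    Matrix.head_fin_const] at hg
  rcases zmod2_cases' (g 0) with h0 | h0 <;>
  rcases zmod2_cases' (g 1) with h1 | h1 <;>
  rcases zmod2_cases' (g 2) with h2 | h2 <;>
  rcases zmod2_cases' (g 3) with h3 | h3 <;>
  simp only [h0, h1, h2, h3, zero_smul, one_smul, zero_add, add_zero] at hg <;>
  first
    | exact absurd hg (by assumption)
    | (intro i; fin_cases i <;> simp [h0, h1, h2, h3])

end Helpers

set_option maxHeartbeats 1000000 in
/-- Every set of at most 4 nonzero vectors in `(ℤ/2)^n` has one of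
eight possible forms, expressed in terms of linearly independent vectors. -/
theorem small_subsets_of_nonzero_vectors (n : ℕ) (S : Finset (Fin n → ZMod 2))
    (hS : ∀ v ∈ S, v ≠ 0) (hcard : S.card ≤ 4) :
    S = ∅ ∨
    (∃ v₁, LinearIndependent (ZMod 2) ![v₁] ∧ S = {v₁}) ∨
    (∃ v₁ v₂, LinearIndependent (ZMod 2) ![v₁, v₂] ∧ S = {v₁, v₂}) ∨
    (∃ v₁ v₂ v₃, LinearIndependent (ZMod 2) ![v₁, v₂, v₃] ∧ S = {v₁, v₂, v₃}) ∨
    (∃ v₁ v₂, LinearIndependent (ZMod 2) ![v₁, v₂] ∧ S = {v₁, v₂, v₁ + v₂}) ∨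
    (∃ v₁ v₂ v₃ v₄, LinearIndependent (ZMod 2) ![v₁, v₂, v₃, v₄] ∧ S = {v₁, v₂, v₃, v₄}) ∨
    (∃ v₁ v₂ v₃, LinearIndependent (ZMod 2) ![v₁, v₂, v₃] ∧ S = {v₁, v₂, v₃, v₁ + v₂}) ∨
    (∃ v₁ v₂ v₃, LinearIndependent (ZMod 2) ![v₁, v₂, v₃] ∧
      S = {v₁, v₂, v₃, v₁ + v₂ + v₃}) := by
  interval_cases h : S.card
  · -- card = 0
    exact Or.inl (Finset.card_eq_zero.mp h)
  · -- card = 1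
    obtain ⟨a, rfl⟩ := Finset.card_eq_one.mp h
    have ha : a ≠ 0 := hS a (by simp)
    exact Or.inr (Or.inl ⟨a, li1' a ha, rfl⟩)
  · -- card = 2
    obtain ⟨a, b, hab, rfl⟩ := Finset.card_eq_two.mp h
    have ha : a ≠ 0 := hS a (by simp)
    have hb : b ≠ 0 := hS b (by simp)
    exact Or.inr (Or.inr (Or.inl ⟨a, b, li2' a b ha hb (add2_ne' a b hab), rfl⟩))
  · -- card = 3
    obtain ⟨a, b, c, hab, hac, hbc, rfl⟩ := Finset.card_eq_three.mp h
    have ha : a ≠ 0 := hS a (by simp)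
    have hb : b ≠ 0 := hS b (by simp)
    have hc : c ≠ 0 := hS c (by simp)
    by_cases h1 : a + b + c = 0
    · -- c = a + b
      have hc2 : c = a + b := (add2_eq' (a + b) c h1).symm
      subst hc2
      exact Or.inr (Or.inr (Or.inr (Or.inr (Or.inl
        ⟨a, b, li2' a b ha hb (add2_ne' a b hab), rfl⟩))))
    · exact Or.inr (Or.inr (Or.inr (Or.inl
        ⟨a, b, c, li3' a b c ha hb hc (add2_ne' a b hab) (add2_ne' a c hac)
          (add2_ne' b c hbc) h1, rfl⟩)))
  · -- card = 4
    obtain ⟨a, T, haT, hins, hT3⟩ := Finset.card_eq_succ.mp (show S.card = 3 + 1 from h)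
    obtain ⟨b, c, d, hbc, hbd, hcd, rfl⟩ := Finset.card_eq_three.mp hT3
    subst hins
    have hab : a ≠ b := by intro e; exact haT (by simp [e])
    have hac : a ≠ c := by intro e; exact haT (by simp [e])
    have had : a ≠ d := by intro e; exact haT (by simp [e])
    have ha : a ≠ 0 := hS a (by simp)
    have hb : b ≠ 0 := hS b (by simp)
    have hc : c ≠ 0 := hS c (by simp)
    have hd : d ≠ 0 := hS d (by simp)
    by_cases h1 : a + b + c = 0
    · -- c = a + b, form 7 with (a, b, d)
      have hc2 : c = a + b := (add2_eq' (a + b) c h1).symm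
      subst hc2
      refine Or.inr (Or.inr (Or.inr (Or.inr (Or.inr (Or.inr (Or.inl
        ⟨a, b, d, li3' a b d ha hb hd (add2_ne' a b hab) (add2_ne' a d had)
          (add2_ne' b d hbd) (add2_ne' (a + b) d hcd), ?_⟩))))))
      rw [Finset.pair_comm (a + b) d]
    by_cases h2 : a + b + d = 0
    · -- d = a + b, form 7 with (a, b, c)
      have hd2 : d = a + b := (add2_eq' (a + b) d h2).symm
      subst hd2
      refine Or.inr (Or.inr (Or.inr (Or.inr (Or.inr (Or.inr (Or.inl
        ⟨a, b, c, li3' a b c ha hb hc (add2_ne' a b hab) (add2_ne' a c hac)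
          (add2_ne' b c hbc) h1, rfl⟩))))))
    by_cases h3 : a + c + d = 0
    · -- d = a + c, form 7 with (a, c, b)
      have hd2 : d = a + c := (add2_eq' (a + c) d h3).symm
      subst hd2
      have hacb : a + c + b ≠ 0 := by
        intro e; apply h1; rw [← e]; abel
      refine Or.inr (Or.inr (Or.inr (Or.inr (Or.inr (Or.inr (Or.inl
        ⟨a, c, b, li3' a c b ha hc hb (add2_ne' a c hac) (add2_ne' a b hab)
          (add2_ne' c b (Ne.symm hbc)) hacb, ?_⟩))))))
      rw [Finset.insert_comm b c]
    by_cases h4 : b + c + d = 0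
    · -- d = b + c, form 7 with (b, c, a)
      have hd2 : d = b + c := (add2_eq' (b + c) d h4).symm
      subst hd2
      have hbca : b + c + a ≠ 0 := by
        intro e; apply h1; rw [← e]; abel
      refine Or.inr (Or.inr (Or.inr (Or.inr (Or.inr (Or.inr (Or.inl
        ⟨b, c, a, li3' b c a hb hc ha (add2_ne' b c hbc) (add2_ne' b a (Ne.symm hab))
          (add2_ne' c a (Ne.symm hac)) hbca, ?_⟩))))))
      rw [Finset.insert_comm a b, Finset.insert_comm a c]
    by_cases h5 : a + b + c + d = 0
    · -- d = a + b + c, form 8 with (a, b, c)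
      have hd2 : d = a + b + c := (add2_eq' (a + b + c) d h5).symm
      subst hd2
      exact Or.inr (Or.inr (Or.inr (Or.inr (Or.inr (Or.inr (Or.inr
        ⟨a, b, c, li3' a b c ha hb hc (add2_ne' a b hab) (add2_ne' a c hac)
          (add2_ne' b c hbc) h1, rfl⟩))))))
    · -- all independent, form 6
      exact Or.inr (Or.inr (Or.inr (Or.inr (Or.inr (Or.inl
        ⟨a, b, c, d, li4' a b c d ha hb hc hd (add2_ne' a b hab) (add2_ne' a c hac)
          (add2_ne' a d had) (add2_ne' b c hbc) (add2_ne' b d hbd) (add2_ne' c d hcd)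
          h1 h2 h3 h4 h5, rfl⟩)))))
end

section
/- Let g ≥ 1 and let G = {Y ∈ Sp_{2g}(ℤ)[2] : Y e_1 = ±e_1 and Y e_{g+1} = ±e_{g+1}} be the subgroup of Sp_{2g}(ℤ)[2] stabilizing the lax vectors ⟨e_1⟩ and ⟨e_{g+1}⟩. Then every Y ∈ G satisfies Y e_1 = ε e_1 and Y e_{g+1} = ε e_{g+1} for a single sign ε ∈ {±1} and preserves the submodule W spanned by {e_i, e_{g+i} : 2 ≤ i ≤ g}, and the map Y ↦ (ε, Y|_W) is a group isomorphism from G onto (ℤ/2) × Sp_{2g−2}(ℤ)[2]. -/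
open scoped BigOperators

/-- The `j`-th standard basis vector of `ℤ^{2g}` (for an index given as a natural number). -/
def stdE (g : ℕ) (j : ℕ) : SV g ℤ := fun i => if (i : ℕ) = j then 1 else 0

/-- The embedding `ℤ^{2(g-1)} → ℤ^{2g}` onto the span `W` of
`e_2, …, e_g, e_{g+2}, …, e_{2g}` (the orthogonal complement of `⟨e_1, e_{g+1}⟩`). -/
def embMap (g : ℕ) (v : SV (g-1) ℤ) : SV g ℤ := fun j =>
  if h0 : (j : ℕ) = 0 ∨ (j : ℕ) = g then 0
  else if h : (j : ℕ) < g then v ⟨(j : ℕ) - 1, by push_neg at h0; omega⟩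
  else v ⟨(g - 1) + ((j : ℕ) - g - 1), by push_neg at h0; have := j.isLt; omega⟩

/-- The subgroup of `Sp_{2g}(ℤ)[2]` stabilizing the lax vectors `⟨e_1⟩` and `⟨e_{g+1}⟩`. -/
def StabG (g : ℕ) : Subgroup (SAut g ℤ) where
  carrier := {Y | Y ∈ SpLevel2 g ∧ (Y (stdE g 0) = stdE g 0 ∨ Y (stdE g 0) = -stdE g 0) ∧
    (Y (stdE g g) = stdE g g ∨ Y (stdE g g) = -stdE g g)}
  one_mem' := ⟨(SpLevel2 g).one_mem, Or.inl rfl, Or.inl rfl⟩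
  mul_mem' := by
    have key : ∀ (M N : SAut g ℤ) (x : SV g ℤ), (M x = x ∨ M x = -x) →
        (N x = x ∨ N x = -x) → ((M * N) x = x ∨ (M * N) x = -x) := by
      intro M N x hM hN
      have hmul : (M * N) x = M (N x) := rfl
      rcases hN with h | h <;> rcases hM with h' | h' <;> simp [hmul, h, map_neg, h']
    rintro M N ⟨hM, hM1, hMg⟩ ⟨hN, hN1, hNg⟩
    exact ⟨(SpLevel2 g).mul_mem hM hN, key M N _ hM1 hN1, key M N _ hMg hNg⟩
  inv_mem' := by
    have key : ∀ (M : SAut g ℤ) (x : SV g ℤ), (M x = x ∨ M x = -x) →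
        (M⁻¹ x = x ∨ M⁻¹ x = -x) := by
      intro M x h
      rcases h with h | h
      · left
        show M.symm x = x
        conv_lhs => rw [← h]
        exact M.symm_apply_apply x
      · right
        show M.symm x = -x
        have h2 : M.symm (M x) = M.symm (-x) := congrArg _ h
        rw [M.symm_apply_apply, map_neg] at h2
        exact neg_eq_iff_eq_neg.mp h2.symm
    rintro M ⟨hM, hM1, hMg⟩
    exact ⟨(SpLevel2 g).inv_mem hM, key M _ hM1, key M _ hMg⟩

section StabAux

variable (g' : ℕ)

/-- Projection `ℤ^{2g} → ℤ^{2(g-1)}`, left inverse of `embMap`. -/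
def resMap (g' : ℕ) (v : SV (g'+1) ℤ) : SV g' ℤ := fun i =>
  if _h : (i : ℕ) < g' then v ⟨(i : ℕ) + 1, by have := i.isLt; omega⟩
  else v ⟨(i : ℕ) + 2, by have := i.isLt; omega⟩

lemma embMap_apply_zero (v : SV g' ℤ) : embMap (g'+1) v ⟨0, by omega⟩ = 0 := by
  rw [embMap]; rw [dif_pos (Or.inl rfl)]

lemma embMap_apply_g (v : SV g' ℤ) : embMap (g'+1) v ⟨g'+1, by omega⟩ = 0 := by
  rw [embMap]; rw [dif_pos (Or.inr rfl)]

lemma embMap_apply_lt (v : SV g' ℤ) (j : Fin (2*(g'+1))) (h1 : (j:ℕ) ≠ 0)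
    (h2 : (j:ℕ) < g'+1) :
    embMap (g'+1) v j = v ⟨(j:ℕ)-1, by omega⟩ := by
  rw [embMap]; rw [dif_neg (by omega), dif_pos h2]

lemma embMap_apply_ge (v : SV g' ℤ) (j : Fin (2*(g'+1))) (h1 : g'+1 < (j:ℕ)) :
    embMap (g'+1) v j = v ⟨(j:ℕ)-2, by have := j.isLt; omega⟩ := by
  rw [embMap]; rw [dif_neg (by omega), dif_neg (by omega)]
  congr 1
  exact Fin.ext (by simp; omega)

lemma resMap_apply_lt (v : SV (g'+1) ℤ) (i : Fin (2*g')) (h : (i:ℕ) < g') :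
    resMap g' v i = v ⟨(i:ℕ)+1, by have := i.isLt; omega⟩ := by
  rw [resMap]; rw [dif_pos h]

lemma resMap_apply_ge (v : SV (g'+1) ℤ) (i : Fin (2*g')) (h : g' ≤ (i:ℕ)) :
    resMap g' v i = v ⟨(i:ℕ)+2, by have := i.isLt; omega⟩ := by
  rw [resMap]; rw [dif_neg (by omega)]

lemma resMap_embMap (v : SV g' ℤ) : resMap g' (embMap (g'+1) v) = v := by
  funext i
  have hi : (i:ℕ) < 2*g' := i.isLt
  by_cases h : (i:ℕ) < g'
  · rw [resMap_apply_lt _ _ _ h, embMap_apply_lt _ _ _ (by simp) (by simp; omega)]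
    exact congrArg v (Fin.ext (by simp))
  · rw [resMap_apply_ge _ _ _ (by omega), embMap_apply_ge _ _ _ (by simp; omega)]
    exact congrArg v (Fin.ext (by simp))

set_option maxHeartbeats 1000000 in
lemma embMap_resMap (v : SV (g'+1) ℤ) (h0 : v ⟨0, by omega⟩ = 0)
    (hg : v ⟨g'+1, by omega⟩ = 0) : embMap (g'+1) (resMap g' v) = v := by
  funext j
  have hj : (j:ℕ) < 2*(g'+1) := j.isLt
  rcases Nat.lt_trichotomy (j:ℕ) (g'+1) with h | h | h
  · by_cases h1 : (j:ℕ) = 0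
    · rw [show j = ⟨0, by omega⟩ from Fin.ext h1, embMap_apply_zero]
      exact h0.symm
    · rw [embMap_apply_lt _ _ _ h1 h, resMap_apply_lt _ _ _ (by simp; omega)]
      congr 1; exact Fin.ext (by simp; omega)
  · rw [show j = ⟨g'+1, by omega⟩ from Fin.ext h, embMap_apply_g]
    exact hg.symm
  · rw [embMap_apply_ge _ _ _ h, resMap_apply_ge _ _ _ (by simp; omega)]
    congr 1; exact Fin.ext (by simp; omega)

lemma embMap_add (v w : SV g' ℤ) :
    embMap (g'+1) (v + w) = embMap (g'+1) v + embMap (g'+1) w := by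
  funext j
  simp only [Pi.add_apply, embMap]
  split_ifs <;> simp

lemma embMap_smul (c : ℤ) (v : SV g' ℤ) :
    embMap (g'+1) (c • v) = c • embMap (g'+1) v := by
  funext j
  simp only [Pi.smul_apply, embMap, smul_eq_mul]
  split_ifs <;> simp

lemma resMap_add (v w : SV (g'+1) ℤ) :
    resMap g' (v + w) = resMap g' v + resMap g' w := by
  funext i
  simp only [Pi.add_apply, resMap]
  split_ifs <;> simp

lemma resMap_smul (c : ℤ) (v : SV (g'+1) ℤ) :
    resMap g' (c • v) = c • resMap g' v := by
  funext i
  simp only [Pi.smul_apply, resMap, smul_eq_mul]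
  split_ifs <;> simp

/-- `embMap` as a linear map. -/
def embLin : SV g' ℤ →ₗ[ℤ] SV (g'+1) ℤ where
  toFun := embMap (g'+1)
  map_add' := embMap_add g'
  map_smul' := embMap_smul g'

/-- `resMap` as a linear map. -/
def resLin : SV (g'+1) ℤ →ₗ[ℤ] SV g' ℤ where
  toFun := resMap g'
  map_add' := resMap_add g'
  map_smul' := resMap_smul g'

lemma symplForm_split (v w : SV (g'+1) ℤ) :
    symplForm (g'+1) ℤ v w =
      v ⟨0, by omega⟩ * w ⟨g'+1, by omega⟩ - v ⟨g'+1, by omega⟩ * w ⟨0, by omega⟩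
        + symplForm g' ℤ (resMap g' v) (resMap g' w) := by
  rw [symplForm, symplForm, Fin.sum_univ_succ]
  congr 1
  refine Finset.sum_congr rfl fun i _ => ?_
  have hi : (i:ℕ) < g' := i.isLt
  rw [resMap_apply_lt _ _ _ (by simpa using hi), resMap_apply_ge _ _ _ (by simp),
    resMap_apply_ge _ _ _ (by simp), resMap_apply_lt _ _ _ (by simpa using hi)]
  congr 2 <;> exact congrArg _ (Fin.ext (by simp [Fin.val_succ]; omega))

lemma symplForm_emb (v w : SV g' ℤ) :
    symplForm (g'+1) ℤ (embMap (g'+1) v) (embMap (g'+1) w) = symplForm g' ℤ v w := by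
  rw [symplForm_split, embMap_apply_zero, embMap_apply_zero, embMap_apply_g,
    embMap_apply_g, resMap_embMap, resMap_embMap]
  ring

lemma resMap_stdE0 : resMap g' (stdE (g'+1) 0) = 0 := by
  funext i
  have hi : (i:ℕ) < 2*g' := i.isLt
  by_cases h : (i:ℕ) < g'
  · rw [resMap_apply_lt _ _ _ h]; simp [stdE]
  · rw [resMap_apply_ge _ _ _ (by omega)]; simp [stdE]

lemma resMap_stdEg : resMap g' (stdE (g'+1) (g'+1)) = 0 := by
  funext i
  have hi : (i:ℕ) < 2*g' := i.isLt
  by_cases h : (i:ℕ) < g'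
  · rw [resMap_apply_lt _ _ _ h]
    show (if (i:ℕ)+1 = g'+1 then (1:ℤ) else 0) = 0
    rw [if_neg (by omega)]
  · rw [resMap_apply_ge _ _ _ (by omega)]
    show (if (i:ℕ)+2 = g'+1 then (1:ℤ) else 0) = 0
    rw [if_neg (by omega)]

lemma symplForm_zero_right (v : SV g' ℤ) : symplForm g' ℤ v 0 = 0 := by
  rw [symplForm]; simp

lemma symplForm_e0 (v : SV (g'+1) ℤ) :
    symplForm (g'+1) ℤ v (stdE (g'+1) 0) = -(v ⟨g'+1, by omega⟩) := by
  rw [symplForm_split, resMap_stdE0, symplForm_zero_right]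
  have h1 : stdE (g'+1) 0 ⟨g'+1, by omega⟩ = 0 := by
    show (if g'+1 = 0 then (1:ℤ) else 0) = 0
    rw [if_neg (by omega)]
  have h2 : stdE (g'+1) 0 ⟨0, by omega⟩ = 1 := rfl
  rw [h1, h2]; ring

lemma symplForm_eg (v : SV (g'+1) ℤ) :
    symplForm (g'+1) ℤ v (stdE (g'+1) (g'+1)) = v ⟨0, by omega⟩ := by
  rw [symplForm_split, resMap_stdEg, symplForm_zero_right]
  have h1 : stdE (g'+1) (g'+1) ⟨g'+1, by omega⟩ = 1 := by
    show (if g'+1 = g'+1 then (1:ℤ) else 0) = 1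
    rw [if_pos rfl]
  have h2 : stdE (g'+1) (g'+1) ⟨0, by omega⟩ = 0 := by
    show (if 0 = g'+1 then (1:ℤ) else 0) = 0
    rw [if_neg (by omega)]
  rw [h1, h2]; ring

lemma symplForm_neg_right (g : ℕ) (v w : SV g ℤ) :
    symplForm g ℤ v (-w) = -symplForm g ℤ v w := by
  rw [symplForm, symplForm, ← Finset.sum_neg_distrib]
  refine Finset.sum_congr rfl fun i _ => ?_
  simp only [Pi.neg_apply]; ring

lemma stdE_ne_neg (j : ℕ) (hj : j < 2*(g'+1)) :
    stdE (g'+1) j ≠ -stdE (g'+1) j := by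
  intro h
  have := congrFun h ⟨j, hj⟩
  simp [stdE] at this

/-- Decomposition of a vector along `e_0`, `e_g`, and `W`. -/
lemma decomp (v : SV (g'+1) ℤ) :
    v = v ⟨0, by omega⟩ • stdE (g'+1) 0 + v ⟨g'+1, by omega⟩ • stdE (g'+1) (g'+1)
      + embMap (g'+1) (resMap g' v) := by
  funext j
  have hj : (j:ℕ) < 2*(g'+1) := j.isLt
  simp only [Pi.add_apply, Pi.smul_apply, smul_eq_mul, stdE]
  rcases Nat.lt_trichotomy (j:ℕ) (g'+1) with h | h | h
  · by_cases h1 : (j:ℕ) = 0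
    · rw [show j = ⟨0, by omega⟩ from Fin.ext h1, embMap_apply_zero]
      norm_num
    · rw [embMap_apply_lt _ _ _ h1 h, resMap_apply_lt _ _ _ (by simp; omega)]
      rw [if_neg h1, if_neg (by omega)]
      have : (⟨(j:ℕ)-1+1, by omega⟩ : Fin (2*(g'+1))) = j := Fin.ext (by simp; omega)
      rw [this]; ring
  · rw [show j = ⟨g'+1, by omega⟩ from Fin.ext h, embMap_apply_g]
    norm_num
  · rw [embMap_apply_ge _ _ _ h, resMap_apply_ge _ _ _ (by simp; omega)]
    rw [if_neg (by omega), if_neg (by omega)]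
    have : (⟨(j:ℕ)-2+2, by omega⟩ : Fin (2*(g'+1))) = j := Fin.ext (by simp; omega)
    rw [this]; ring


lemma symplForm_neg_left (g : ℕ) (v w : SV g ℤ) :
    symplForm g ℤ (-v) w = -symplForm g ℤ v w := by
  rw [symplForm, symplForm, ← Finset.sum_neg_distrib]
  refine Finset.sum_congr rfl fun i _ => ?_
  simp only [Pi.neg_apply]; ring

lemma stdE0_at0 : stdE (g'+1) 0 ⟨0, by omega⟩ = 1 := rfl

lemma preserveW (Y : SAut (g'+1) ℤ) (hY : Y ∈ StabG (g'+1)) (x : SV (g'+1) ℤ)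
    (h0x : x ⟨0, by omega⟩ = 0) (hgx : x ⟨g'+1, by omega⟩ = 0) :
    Y x ⟨0, by omega⟩ = 0 ∧ Y x ⟨g'+1, by omega⟩ = 0 := by
  obtain ⟨⟨hSp, -⟩, he0, heg⟩ := hY
  constructor
  · have h1 : symplForm (g'+1) ℤ (Y x) (Y (stdE (g'+1) (g'+1))) =
        symplForm (g'+1) ℤ x (stdE (g'+1) (g'+1)) := hSp x _
    rw [symplForm_eg, h0x] at h1
    rcases heg with he | he
    · rw [he, symplForm_eg] at h1; exact h1
    · rw [he, symplForm_neg_right, symplForm_eg] at h1; omega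
  · have h1 : symplForm (g'+1) ℤ (Y x) (Y (stdE (g'+1) 0)) =
        symplForm (g'+1) ℤ x (stdE (g'+1) 0) := hSp x _
    rw [symplForm_e0, hgx, neg_zero] at h1
    rcases he0 with he | he
    · rw [he, symplForm_e0] at h1; omega
    · rw [he, symplForm_neg_right, symplForm_e0] at h1; omega

lemma emb_res_Y (Y : SAut (g'+1) ℤ) (hY : Y ∈ StabG (g'+1)) (v : SV g' ℤ) :
    embMap (g'+1) (resMap g' (Y (embMap (g'+1) v))) = Y (embMap (g'+1) v) := by
  obtain ⟨h1, h2⟩ := preserveW g' Y hY (embMap (g'+1) v)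
    (embMap_apply_zero g' v) (embMap_apply_g g' v)
  exact embMap_resMap g' _ h1 h2

lemma sign_agree (Y : SAut (g'+1) ℤ) (hY : Y ∈ StabG (g'+1)) :
    (Y (stdE (g'+1) 0) = stdE (g'+1) 0 ∧ Y (stdE (g'+1) (g'+1)) = stdE (g'+1) (g'+1)) ∨
    (Y (stdE (g'+1) 0) = -stdE (g'+1) 0 ∧
      Y (stdE (g'+1) (g'+1)) = -stdE (g'+1) (g'+1)) := by
  obtain ⟨⟨hSp, -⟩, he0, heg⟩ := hY
  have key : symplForm (g'+1) ℤ (Y (stdE (g'+1) 0)) (Y (stdE (g'+1) (g'+1))) = 1 := by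
    rw [hSp, symplForm_eg, stdE0_at0]
  rcases he0 with h0 | h0 <;> rcases heg with hg | hg
  · exact Or.inl ⟨h0, hg⟩
  · exfalso
    rw [h0, hg, symplForm_neg_right, symplForm_eg, stdE0_at0] at key
    omega
  · exfalso
    rw [h0, hg, symplForm_neg_left, symplForm_eg, stdE0_at0] at key
    omega
  · exact Or.inr ⟨h0, hg⟩

/-- The restriction of `Y` to `W ≅ ℤ^{2(g-1)}`, as a linear automorphism. -/
def restrL (Y : ↥(StabG (g'+1))) : SAut g' ℤ :=
  LinearEquiv.ofLinear
    (resLin g' ∘ₗ ((Y : SAut (g'+1) ℤ) : SV (g'+1) ℤ →ₗ[ℤ] SV (g'+1) ℤ) ∘ₗ embLin g')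
    (resLin g' ∘ₗ (((Y⁻¹ : ↥(StabG (g'+1))) : SAut (g'+1) ℤ) :
      SV (g'+1) ℤ →ₗ[ℤ] SV (g'+1) ℤ) ∘ₗ embLin g')
    (by
      refine LinearMap.ext fun v => ?_
      show resMap g' ((Y : SAut (g'+1) ℤ)
        (embMap (g'+1) (resMap g' (((Y⁻¹ : ↥(StabG (g'+1))) : SAut (g'+1) ℤ)
          (embMap (g'+1) v))))) = v
      rw [emb_res_Y g' _ (Y⁻¹).2 v]
      have : (Y : SAut (g'+1) ℤ) (((Y⁻¹ : ↥(StabG (g'+1))) : SAut (g'+1) ℤ)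
          (embMap (g'+1) v)) = embMap (g'+1) v :=
        (Y : SAut (g'+1) ℤ).apply_symm_apply _
      rw [this, resMap_embMap])
    (by
      refine LinearMap.ext fun v => ?_
      show resMap g' (((Y⁻¹ : ↥(StabG (g'+1))) : SAut (g'+1) ℤ)
        (embMap (g'+1) (resMap g' ((Y : SAut (g'+1) ℤ) (embMap (g'+1) v))))) = v
      rw [emb_res_Y g' _ Y.2 v]
      have : ((Y⁻¹ : ↥(StabG (g'+1))) : SAut (g'+1) ℤ) ((Y : SAut (g'+1) ℤ)
          (embMap (g'+1) v)) = embMap (g'+1) v :=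
        (Y : SAut (g'+1) ℤ).symm_apply_apply _
      rw [this, resMap_embMap])

lemma restrL_apply (Y : ↥(StabG (g'+1))) (v : SV g' ℤ) :
    restrL g' Y v = resMap g' ((Y : SAut (g'+1) ℤ) (embMap (g'+1) v)) := by
  rfl

lemma restrL_prop (Y : ↥(StabG (g'+1))) (v : SV g' ℤ) :
    (Y : SAut (g'+1) ℤ) (embMap (g'+1) v) = embMap (g'+1) (restrL g' Y v) := by
  rw [restrL_apply, emb_res_Y g' _ Y.2 v]

lemma restrL_mem (Y : ↥(StabG (g'+1))) : restrL g' Y ∈ SpLevel2 g' := by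
  obtain ⟨⟨hSp, hMod⟩, -, -⟩ := Y.2
  constructor
  · intro v w
    rw [restrL_apply, restrL_apply, ← symplForm_emb g', emb_res_Y g' _ Y.2,
      emb_res_Y g' _ Y.2, hSp, symplForm_emb]
  · intro v
    funext i
    have hi : (i:ℕ) < 2*g' := i.isLt
    have key := congrFun (hMod (embMap (g'+1) v))
    rw [restrL_apply]
    by_cases h : (i:ℕ) < g'
    · rw [rMap, rMap, resMap_apply_lt _ _ _ h]
      have := key ⟨(i:ℕ)+1, by omega⟩
      rw [rMap, rMap] at this
      rw [this, embMap_apply_lt _ _ _ (by simp) (by simp; omega)]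
      exact congrArg _ (congrArg v (Fin.ext (by simp)))
    · rw [rMap, rMap, resMap_apply_ge _ _ _ (by omega)]
      have := key ⟨(i:ℕ)+2, by omega⟩
      rw [rMap, rMap] at this
      rw [this, embMap_apply_ge _ _ _ (by simp; omega)]
      exact congrArg _ (congrArg v (Fin.ext (by simp)))

open Classical in
/-- The homomorphism `G → ℤ/2 × Sp_{2g-2}(ℤ)[2]`. -/
noncomputable def Fhom : ↥(StabG (g'+1)) →* Multiplicative (ZMod 2) × ↥(SpLevel2 g') where
  toFun Y := (if (Y : SAut (g'+1) ℤ) (stdE (g'+1) 0) = stdE (g'+1) 0 then 1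
      else Multiplicative.ofAdd 1, ⟨restrL g' Y, restrL_mem g' Y⟩)
  map_one' := by
    refine Prod.ext ?_ ?_
    · have h1 : ((1 : ↥(StabG (g'+1))) : SAut (g'+1) ℤ) (stdE (g'+1) 0) = stdE (g'+1) 0 := rfl
      show (if ((1 : ↥(StabG (g'+1))) : SAut (g'+1) ℤ) (stdE (g'+1) 0) = stdE (g'+1) 0
        then (1 : Multiplicative (ZMod 2)) else Multiplicative.ofAdd 1) = 1
      rw [if_pos h1]
    · refine Subtype.ext (LinearEquiv.ext fun v => ?_)
      show restrL g' 1 v = v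
      rw [restrL_apply]
      show resMap g' (embMap (g'+1) v) = v
      rw [resMap_embMap]
  map_mul' A B := by
    refine Prod.ext ?_ ?_
    · show (if _ then _ else _) = (if _ then _ else _) * (if _ then _ else _)
      have hAB : ((A * B : ↥(StabG (g'+1))) : SAut (g'+1) ℤ) (stdE (g'+1) 0)
          = (A : SAut (g'+1) ℤ) ((B : SAut (g'+1) ℤ) (stdE (g'+1) 0)) := rfl
      have hne := stdE_ne_neg g' 0 (by omega)
      obtain ⟨-, hA0, -⟩ := A.2
      obtain ⟨-, hB0, -⟩ := B.2
      rcases hA0 with hA | hA <;> rcases hB0 with hB | hB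
      · have c : ((A * B : ↥(StabG (g'+1))) : SAut (g'+1) ℤ) (stdE (g'+1) 0)
            = stdE (g'+1) 0 := by rw [hAB, hB, hA]
        rw [if_pos c, if_pos hA, if_pos hB, one_mul]
      · have c : ((A * B : ↥(StabG (g'+1))) : SAut (g'+1) ℤ) (stdE (g'+1) 0)
            = -stdE (g'+1) 0 := by rw [hAB, hB, map_neg, hA]
        rw [if_neg (by rw [c]; exact fun h => hne h.symm), if_pos hA,
          if_neg (fun h => hne ((hB.symm.trans h).symm)), one_mul]
      · have c : ((A * B : ↥(StabG (g'+1))) : SAut (g'+1) ℤ) (stdE (g'+1) 0)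
            = -stdE (g'+1) 0 := by rw [hAB, hB, hA]
        rw [if_neg (by rw [c]; exact fun h => hne h.symm),
          if_neg (fun h => hne ((hA.symm.trans h).symm)), if_pos hB, mul_one]
      · have c : ((A * B : ↥(StabG (g'+1))) : SAut (g'+1) ℤ) (stdE (g'+1) 0)
            = stdE (g'+1) 0 := by rw [hAB, hB, map_neg, hA, neg_neg]
        rw [if_pos c, if_neg (fun h => hne ((hA.symm.trans h).symm)),
          if_neg (fun h => hne ((hB.symm.trans h).symm))]
        decide
    · refine Subtype.ext (LinearEquiv.ext fun v => ?_)
      show restrL g' (A * B) v = restrL g' A (restrL g' B v)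
      rw [restrL_apply, restrL_apply, restrL_apply, emb_res_Y g' _ B.2 v]
      rfl

lemma embMap_zero : embMap (g'+1) (0 : SV g' ℤ) = 0 := by
  funext j
  simp only [embMap, Pi.zero_apply]
  split_ifs <;> rfl

lemma embMap_resMap_apply (v : SV (g'+1) ℤ) (j : Fin (2*(g'+1))) (h0 : (j:ℕ) ≠ 0)
    (hg : (j:ℕ) ≠ g'+1) : embMap (g'+1) (resMap g' v) j = v j := by
  have hj : (j:ℕ) < 2*(g'+1) := j.isLt
  rcases Nat.lt_trichotomy (j:ℕ) (g'+1) with h | h | h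
  · rw [embMap_apply_lt _ _ _ h0 h, resMap_apply_lt _ _ _ (by simp; omega)]
    exact congrArg v (Fin.ext (by simp; omega))
  · exact absurd h hg
  · rw [embMap_apply_ge _ _ _ h, resMap_apply_ge _ _ _ (by simp; omega)]
    exact congrArg v (Fin.ext (by simp; omega))

/-- The linear endomorphism acting by `ε` on `e_0, e_g` and by `Z` on `W`. -/
def bigTlin (ε : ℤ) (Z : SV g' ℤ →ₗ[ℤ] SV g' ℤ) : SV (g'+1) ℤ →ₗ[ℤ] SV (g'+1) ℤ where
  toFun v := fun j =>
    if (j:ℕ) = 0 then ε * v ⟨0, by omega⟩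
    else if (j:ℕ) = g'+1 then ε * v ⟨g'+1, by omega⟩
    else embMap (g'+1) (Z (resMap g' v)) j
  map_add' v w := by
    funext j
    simp only [Pi.add_apply]
    rw [resMap_add, map_add, embMap_add]
    split_ifs <;> first | rfl | ring
  map_smul' c v := by
    funext j
    simp only [Pi.smul_apply, smul_eq_mul, RingHom.id_apply]
    rw [resMap_smul, map_smul, embMap_smul]
    split_ifs <;> first | rfl | ring

lemma bigTlin_apply0 (ε : ℤ) (Z : SV g' ℤ →ₗ[ℤ] SV g' ℤ) (v : SV (g'+1) ℤ)
    (j : Fin (2*(g'+1))) (h : (j:ℕ) = 0) :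
    bigTlin g' ε Z v j = ε * v ⟨0, by omega⟩ := by
  simp only [bigTlin, LinearMap.coe_mk, AddHom.coe_mk]
  rw [if_pos h]

lemma bigTlin_applyg (ε : ℤ) (Z : SV g' ℤ →ₗ[ℤ] SV g' ℤ) (v : SV (g'+1) ℤ)
    (j : Fin (2*(g'+1))) (h0 : (j:ℕ) ≠ 0) (h : (j:ℕ) = g'+1) :
    bigTlin g' ε Z v j = ε * v ⟨g'+1, by omega⟩ := by
  simp only [bigTlin, LinearMap.coe_mk, AddHom.coe_mk]
  rw [if_neg h0, if_pos h]

lemma bigTlin_applyW (ε : ℤ) (Z : SV g' ℤ →ₗ[ℤ] SV g' ℤ) (v : SV (g'+1) ℤ)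
    (j : Fin (2*(g'+1))) (h0 : (j:ℕ) ≠ 0) (h : (j:ℕ) ≠ g'+1) :
    bigTlin g' ε Z v j = embMap (g'+1) (Z (resMap g' v)) j := by
  simp only [bigTlin, LinearMap.coe_mk, AddHom.coe_mk]
  rw [if_neg h0, if_neg h]

lemma resMap_bigTlin (ε : ℤ) (Z : SV g' ℤ →ₗ[ℤ] SV g' ℤ) (v : SV (g'+1) ℤ) :
    resMap g' (bigTlin g' ε Z v) = Z (resMap g' v) := by
  funext i
  have hi : (i:ℕ) < 2*g' := i.isLt
  by_cases h : (i:ℕ) < g'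
  · rw [resMap_apply_lt _ _ _ h, bigTlin_applyW _ _ _ _ _ (by simp) (by simp; omega),
      embMap_apply_lt _ _ _ (by simp) (by simp; omega)]
    exact congrArg _ (Fin.ext (by simp))
  · rw [resMap_apply_ge _ _ _ (by omega), bigTlin_applyW _ _ _ _ _ (by simp) (by simp; omega),
      embMap_apply_ge _ _ _ (by simp; omega)]
    exact congrArg _ (Fin.ext (by simp))

lemma bigTlin_comp (ε : ℤ) (hε : ε * ε = 1) (Z Z' : SV g' ℤ →ₗ[ℤ] SV g' ℤ)
    (hZZ : ∀ x, Z (Z' x) = x) (v : SV (g'+1) ℤ) :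
    bigTlin g' ε Z (bigTlin g' ε Z' v) = v := by
  funext j
  by_cases h0 : (j:ℕ) = 0
  · rw [bigTlin_apply0 _ _ _ _ _ h0, bigTlin_apply0 _ _ _ _ _ rfl, ← mul_assoc, hε, one_mul]
    exact congrArg v (Fin.ext h0.symm)
  · by_cases hg : (j:ℕ) = g'+1
    · rw [bigTlin_applyg _ _ _ _ _ h0 hg, bigTlin_applyg _ _ _ _ _ (by simp) rfl,
        ← mul_assoc, hε, one_mul]
      exact congrArg v (Fin.ext hg.symm)
    · rw [bigTlin_applyW _ _ _ _ _ h0 hg, resMap_bigTlin, hZZ,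
        embMap_resMap_apply _ _ _ h0 hg]

/-- The automorphism acting by `ε` on `e_0, e_g` and by `Z` on `W`. -/
def bigT (ε : ℤ) (hε : ε * ε = 1) (Z : SAut g' ℤ) : SAut (g'+1) ℤ :=
  LinearEquiv.ofLinear (bigTlin g' ε Z.toLinearMap) (bigTlin g' ε Z.symm.toLinearMap)
    (LinearMap.ext fun v => bigTlin_comp g' ε hε _ _ (fun x => Z.apply_symm_apply x) v)
    (LinearMap.ext fun v => bigTlin_comp g' ε hε _ _ (fun x => Z.symm_apply_apply x) v)

lemma bigT_apply (ε : ℤ) (hε : ε * ε = 1) (Z : SAut g' ℤ) (v : SV (g'+1) ℤ) :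
    bigT g' ε hε Z v = bigTlin g' ε Z.toLinearMap v := rfl

lemma bigT_e0 (ε : ℤ) (hε : ε * ε = 1) (Z : SAut g' ℤ) :
    bigT g' ε hε Z (stdE (g'+1) 0) = ε • stdE (g'+1) 0 := by
  funext j
  rw [bigT_apply]
  simp only [Pi.smul_apply, smul_eq_mul]
  by_cases h0 : (j:ℕ) = 0
  · rw [bigTlin_apply0 _ _ _ _ _ h0]
    show ε * (if (0:ℕ) = 0 then (1:ℤ) else 0) = ε * (if (j:ℕ) = 0 then 1 else 0)
    rw [if_pos rfl, if_pos h0]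
  · by_cases hg : (j:ℕ) = g'+1
    · rw [bigTlin_applyg _ _ _ _ _ h0 hg]
      show ε * (if g'+1 = 0 then (1:ℤ) else 0) = ε * (if (j:ℕ) = 0 then 1 else 0)
      rw [if_neg (by omega), if_neg h0]
    · rw [bigTlin_applyW _ _ _ _ _ h0 hg, resMap_stdE0, map_zero, embMap_zero]
      show (0:ℤ) = ε * (if (j:ℕ) = 0 then 1 else 0)
      rw [if_neg h0, mul_zero]

lemma bigT_eg (ε : ℤ) (hε : ε * ε = 1) (Z : SAut g' ℤ) :
    bigT g' ε hε Z (stdE (g'+1) (g'+1)) = ε • stdE (g'+1) (g'+1) := by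
  funext j
  rw [bigT_apply]
  simp only [Pi.smul_apply, smul_eq_mul]
  by_cases h0 : (j:ℕ) = 0
  · rw [bigTlin_apply0 _ _ _ _ _ h0]
    show ε * (if (0:ℕ) = g'+1 then (1:ℤ) else 0) = ε * (if (j:ℕ) = g'+1 then 1 else 0)
    rw [if_neg (by omega), if_neg (by omega)]
  · by_cases hg : (j:ℕ) = g'+1
    · rw [bigTlin_applyg _ _ _ _ _ h0 hg]
      show ε * (if g'+1 = g'+1 then (1:ℤ) else 0) = ε * (if (j:ℕ) = g'+1 then 1 else 0)
      rw [if_pos rfl, if_pos hg]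
    · rw [bigTlin_applyW _ _ _ _ _ h0 hg, resMap_stdEg, map_zero, embMap_zero]
      show (0:ℤ) = ε * (if (j:ℕ) = g'+1 then 1 else 0)
      rw [if_neg hg, mul_zero]

lemma bigT_mem (ε : ℤ) (hε : ε * ε = 1) (hε2 : ε = 1 ∨ ε = -1) (Z : SAut g' ℤ)
    (hZ : Z ∈ SpLevel2 g') : bigT g' ε hε Z ∈ StabG (g'+1) := by
  obtain ⟨hZSp, hZMod⟩ := hZ
  refine ⟨⟨?_, ?_⟩, ?_, ?_⟩
  · intro v w
    rw [bigT_apply, bigT_apply, symplForm_split, symplForm_split g' v w,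
      bigTlin_apply0 g' ε Z.toLinearMap v ⟨0, by omega⟩ rfl,
      bigTlin_apply0 g' ε Z.toLinearMap w ⟨0, by omega⟩ rfl,
      bigTlin_applyg g' ε Z.toLinearMap v ⟨g'+1, by omega⟩ (by simp) rfl,
      bigTlin_applyg g' ε Z.toLinearMap w ⟨g'+1, by omega⟩ (by simp) rfl,
      resMap_bigTlin, resMap_bigTlin]
    have hZ' : symplForm g' ℤ (Z.toLinearMap (resMap g' v)) (Z.toLinearMap (resMap g' w))
        = symplForm g' ℤ (resMap g' v) (resMap g' w) := hZSp _ _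
    rw [hZ']
    rcases hε2 with rfl | rfl <;> ring
  · intro v
    funext j
    rw [rMap, rMap, bigT_apply]
    have hcast : ((ε : ℤ) : ZMod 2) = 1 := by rcases hε2 with rfl | rfl <;> decide
    by_cases h0 : (j:ℕ) = 0
    · rw [bigTlin_apply0 _ _ _ _ _ h0,
        show v j = v ⟨0, by omega⟩ from congrArg v (Fin.ext h0)]
      push_cast
      rw [hcast, one_mul]
    · by_cases hg : (j:ℕ) = g'+1
      · rw [bigTlin_applyg _ _ _ _ _ h0 hg,
          show v j = v ⟨g'+1, by omega⟩ from congrArg v (Fin.ext hg)]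
        push_cast
        rw [hcast, one_mul]
      · rw [bigTlin_applyW _ _ _ _ _ h0 hg]
        have hj : (j:ℕ) < 2*(g'+1) := j.isLt
        rcases Nat.lt_trichotomy (j:ℕ) (g'+1) with h | h | h
        · rw [embMap_apply_lt _ _ _ h0 h]
          have key : ((Z.toLinearMap (resMap g' v) ⟨(j:ℕ)-1, by omega⟩ : ℤ) : ZMod 2)
              = ((resMap g' v ⟨(j:ℕ)-1, by omega⟩ : ℤ) : ZMod 2) :=
            congrFun (hZMod (resMap g' v)) ⟨(j:ℕ)-1, by omega⟩
          rw [key, resMap_apply_lt _ _ _ (by simp; omega)]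
          exact congrArg _ (congrArg v (Fin.ext (by simp; omega)))
        · exact absurd h hg
        · rw [embMap_apply_ge _ _ _ h]
          have key : ((Z.toLinearMap (resMap g' v) ⟨(j:ℕ)-2, by omega⟩ : ℤ) : ZMod 2)
              = ((resMap g' v ⟨(j:ℕ)-2, by omega⟩ : ℤ) : ZMod 2) :=
            congrFun (hZMod (resMap g' v)) ⟨(j:ℕ)-2, by omega⟩
          rw [key, resMap_apply_ge _ _ _ (by simp; omega)]
          exact congrArg _ (congrArg v (Fin.ext (by simp; omega)))
  · rcases hε2 with rfl | rfl
    · exact Or.inl (by rw [bigT_e0, one_smul])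
    · exact Or.inr (by rw [bigT_e0, neg_one_smul])
  · rcases hε2 with rfl | rfl
    · exact Or.inl (by rw [bigT_eg, one_smul])
    · exact Or.inr (by rw [bigT_eg, neg_one_smul])

lemma Fhom_fst_iff (Y : ↥(StabG (g'+1))) :
    (Fhom g' Y).1 = 1 ↔ (Y : SAut (g'+1) ℤ) (stdE (g'+1) 0) = stdE (g'+1) 0 := by
  show (if (Y : SAut (g'+1) ℤ) (stdE (g'+1) 0) = stdE (g'+1) 0 then (1 : Multiplicative (ZMod 2))
    else Multiplicative.ofAdd 1) = 1 ↔ _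
  by_cases h : (Y : SAut (g'+1) ℤ) (stdE (g'+1) 0) = stdE (g'+1) 0
  · rw [if_pos h]; exact iff_of_true rfl h
  · rw [if_neg h]; exact iff_of_false (by decide) h

lemma Fhom_snd_prop (Y : ↥(StabG (g'+1))) (v : SV g' ℤ) :
    (Y : SAut (g'+1) ℤ) (embMap (g'+1) v)
      = embMap (g'+1) ((((Fhom g' Y).2 : ↥(SpLevel2 g')) : SAut g' ℤ) v) :=
  restrL_prop g' Y v

lemma Fhom_injective : Function.Injective (Fhom g') := by
  rw [injective_iff_map_eq_one]
  intro Y hY1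
  have hfst := congrArg Prod.fst hY1
  have hsnd := congrArg Prod.snd hY1
  have he0 : (Y : SAut (g'+1) ℤ) (stdE (g'+1) 0) = stdE (g'+1) 0 :=
    (Fhom_fst_iff g' Y).mp hfst
  have heg : (Y : SAut (g'+1) ℤ) (stdE (g'+1) (g'+1)) = stdE (g'+1) (g'+1) := by
    rcases sign_agree g' (Y : SAut (g'+1) ℤ) Y.2 with ⟨-, h⟩ | ⟨h, -⟩
    · exact h
    · exact absurd (he0.symm.trans h) (stdE_ne_neg g' 0 (by omega))
  have hres : restrL g' Y = 1 := congrArg Subtype.val hsnd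
  have hW : ∀ v : SV g' ℤ, (Y : SAut (g'+1) ℤ) (embMap (g'+1) v) = embMap (g'+1) v := by
    intro v
    rw [restrL_prop g' Y v, hres]
    rfl
  refine Subtype.ext (LinearEquiv.ext fun x => ?_)
  show (Y : SAut (g'+1) ℤ) x = x
  conv_lhs => rw [decomp g' x]
  rw [map_add, map_add, map_smul, map_smul, he0, heg, hW (resMap g' x)]
  exact (decomp g' x).symm

lemma Fhom_surjective : Function.Surjective (Fhom g') := by
  rintro ⟨s, Z⟩
  have hs : s = 1 ∨ s = Multiplicative.ofAdd 1 := by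
    revert s; decide
  rcases hs with rfl | rfl
  · refine ⟨⟨bigT g' 1 (by ring) (Z : SAut g' ℤ),
      bigT_mem g' 1 (by ring) (Or.inl rfl) _ Z.2⟩, Prod.ext ?_ ?_⟩
    · show (if bigT g' 1 (by ring) (Z : SAut g' ℤ) (stdE (g'+1) 0) = stdE (g'+1) 0
        then (1 : Multiplicative (ZMod 2)) else Multiplicative.ofAdd 1) = 1
      rw [if_pos (by rw [bigT_e0, one_smul])]
    · refine Subtype.ext (LinearEquiv.ext fun v => ?_)
      show restrL g' _ v = (Z : SAut g' ℤ) v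
      rw [restrL_apply]
      show resMap g' (bigT g' 1 (by ring) (Z : SAut g' ℤ) (embMap (g'+1) v)) = _
      rw [bigT_apply, resMap_bigTlin, resMap_embMap]
      rfl
  · refine ⟨⟨bigT g' (-1) (by ring) (Z : SAut g' ℤ),
      bigT_mem g' (-1) (by ring) (Or.inr rfl) _ Z.2⟩, Prod.ext ?_ ?_⟩
    · show (if bigT g' (-1) (by ring) (Z : SAut g' ℤ) (stdE (g'+1) 0) = stdE (g'+1) 0
        then (1 : Multiplicative (ZMod 2)) else Multiplicative.ofAdd 1)
        = Multiplicative.ofAdd 1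
      rw [if_neg]
      rw [bigT_e0, neg_one_smul]
      exact fun h => stdE_ne_neg g' 0 (by omega) h.symm
    · refine Subtype.ext (LinearEquiv.ext fun v => ?_)
      show restrL g' _ v = (Z : SAut g' ℤ) v
      rw [restrL_apply]
      show resMap g' (bigT g' (-1) (by ring) (Z : SAut g' ℤ) (embMap (g'+1) v)) = _
      rw [bigT_apply, resMap_bigTlin, resMap_embMap]
      rfl

end StabAux

/-- The stabilizer in `Sp_{2g}(ℤ)[2]` of the lax vectors `⟨e_1⟩` and
`⟨e_{g+1}⟩` splits as `(ℤ/2) × Sp_{2g-2}(ℤ)[2]`: each element acts by a single sign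
`ε` on `e_1` and `e_{g+1}` and preserves the complementary summand `W`, and
`Y ↦ (ε, Y|_W)` is a group isomorphism. -/
theorem stabilizer_splitting (g : ℕ) (hg : 1 ≤ g) :
    (∀ Y : SAut g ℤ, Y ∈ StabG g → ∃ ε : ℤ, (ε = 1 ∨ ε = -1) ∧
      Y (stdE g 0) = ε • stdE g 0 ∧ Y (stdE g g) = ε • stdE g g ∧
      ∀ v : SV (g-1) ℤ, ∃ w : SV (g-1) ℤ, Y (embMap g v) = embMap g w) ∧
    ∃ φ : ↥(StabG g) ≃* Multiplicative (ZMod 2) × ↥(SpLevel2 (g-1)),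
      ∀ Y : ↥(StabG g),
        ((φ Y).1 = 1 ↔ (Y : SAut g ℤ) (stdE g 0) = stdE g 0) ∧
        (∀ v : SV (g-1) ℤ,
          (Y : SAut g ℤ) (embMap g v) = embMap g ((((φ Y).2 : ↥(SpLevel2 (g-1))) : SAut (g-1) ℤ) v)) := by
  obtain ⟨g', rfl⟩ : ∃ g', g = g' + 1 := ⟨g - 1, by omega⟩
  constructor
  · intro Y hY
    rcases sign_agree g' Y hY with ⟨h0, hg1⟩ | ⟨h0, hg1⟩
    · exact ⟨1, Or.inl rfl, by rw [one_smul]; exact h0, by rw [one_smul]; exact hg1,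
        fun v => ⟨resMap g' (Y (embMap (g'+1) v)), (emb_res_Y g' Y hY v).symm⟩⟩
    · exact ⟨-1, Or.inr rfl, by rw [neg_one_smul]; exact h0,
        by rw [neg_one_smul]; exact hg1,
        fun v => ⟨resMap g' (Y (embMap (g'+1) v)), (emb_res_Y g' Y hY v).symm⟩⟩
  · exact ⟨MulEquiv.ofBijective (Fhom g') ⟨Fhom_injective g', Fhom_surjective g'⟩,
      fun Y => ⟨Fhom_fst_iff g' Y, fun v => Fhom_snd_prop g' Y v⟩⟩
end

section
/- Let n ≥ 5 and let ab : B_n → ℤ be the abelianization homomorphism determined by ab(σ_i) = 1 for all i. Then the image of the kernel of the integral Burau representation β_n under ab contains 4ℤ. -/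
/-- The braid relations on generators `σ_1, …, σ_{n-1}` (indexed by `Fin (n-1)`). -/
def braidRels (n : ℕ) : Set (FreeGroup (Fin (n-1))) :=
  {r | (∃ i j : Fin (n-1), (i : ℕ) + 1 = (j : ℕ) ∧
      r = FreeGroup.of i * FreeGroup.of j * FreeGroup.of i *
        (FreeGroup.of j * FreeGroup.of i * FreeGroup.of j)⁻¹) ∨
    (∃ i j : Fin (n-1), (i : ℕ) + 2 ≤ (j : ℕ) ∧
      r = FreeGroup.of i * FreeGroup.of j * (FreeGroup.of j * FreeGroup.of i)⁻¹)}

/-- The braid group `B_n` on `n` strands, as a presented group. -/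
abbrev BraidGroup (n : ℕ) : Type := PresentedGroup (braidRels n)

/-- The standard generator `σ_{i+1}` of the braid group. -/
def braidGen (n : ℕ) (i : Fin (n-1)) : BraidGroup n := PresentedGroup.of i

/-- The generator `σ_{i+1}` of `B_n` for a natural number index `i < n-1`
(and the identity for larger `i`). -/
def braidGen' (n i : ℕ) : BraidGroup n :=
  if h : i < n - 1 then braidGen n ⟨i, h⟩ else 1

/-- The full twist `T_m = (σ_1 σ_2 ⋯ σ_{m-1})^m ∈ B_n` on the first `m` strands;
it is the Dehn twist about a convex curve surrounding the first `m` marked points. -/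
def fullTwist (n m : ℕ) : BraidGroup n :=
  (((List.range (m-1)).map (braidGen' n)).prod) ^ m

/-- The matrix in `GL_n(ℤ)` which is the image of `σ_{i+1}` under the unreduced Burau
representation evaluated at `t = -1`: it agrees with the identity matrix except in rows
and columns `i, i+1`, where it is the block `[[2, -1], [1, 0]]`. -/
def burauMatrix (n : ℕ) (i : Fin (n-1)) : Matrix (Fin n) (Fin n) ℤ := fun k l =>
  if (k : ℕ) = (i : ℕ) ∧ (l : ℕ) = (i : ℕ) then 2
  else if (k : ℕ) = (i : ℕ) ∧ (l : ℕ) = (i : ℕ) + 1 then -1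
  else if (k : ℕ) = (i : ℕ) + 1 ∧ (l : ℕ) = (i : ℕ) then 1
  else if (k : ℕ) = (i : ℕ) + 1 ∧ (l : ℕ) = (i : ℕ) + 1 then 0
  else if k = l then 1 else 0

-- aux
section Aux
variable {n : ℕ}

def embE (h5 : 5 + (n - 5) = n) : (Fin 5 ⊕ Fin (n - 5)) ≃ Fin n :=
  finSumFinEquiv.trans (finCongr h5)

lemma embE_symm_lt (h5 : 5 + (n-5) = n) (k : Fin n) (hk : (k:ℕ) < 5) :
    (embE h5).symm k = Sum.inl ⟨k, hk⟩ := by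
  rw [Equiv.symm_apply_eq]
  apply Fin.ext
  simp [embE]

lemma embE_symm_ge (h5 : 5 + (n-5) = n) (k : Fin n) (hk : ¬ (k:ℕ) < 5) :
    (embE h5).symm k = Sum.inr ⟨(k:ℕ) - 5, by omega⟩ := by
  rw [Equiv.symm_apply_eq]
  apply Fin.ext
  simp [embE]
  omega

def emb (h5 : 5 + (n-5) = n) : Matrix (Fin 5) (Fin 5) ℤ →* Matrix (Fin n) (Fin n) ℤ where
  toFun A := Matrix.reindexAlgEquiv ℤ ℤ (embE h5) (Matrix.fromBlocks A 0 0 1)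
  map_one' := by
    show Matrix.reindexAlgEquiv ℤ ℤ (embE h5) (Matrix.fromBlocks 1 0 0 1) = 1
    rw [Matrix.fromBlocks_one, map_one]
  map_mul' A B := by
    show Matrix.reindexAlgEquiv ℤ ℤ (embE h5) (Matrix.fromBlocks (A*B) 0 0 1) = _ * _
    rw [← map_mul, Matrix.fromBlocks_multiply]
    simp

lemma emb_apply (h5 : 5 + (n-5) = n) (A : Matrix (Fin 5) (Fin 5) ℤ) (k l : Fin n) :
    emb h5 A k l = Matrix.fromBlocks A 0 0 (1 : Matrix (Fin (n-5)) (Fin (n-5)) ℤ)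
      ((embE h5).symm k) ((embE h5).symm l) := rfl

lemma burau_emb (h5 : 5+(n-5)=n) (i : ℕ) (hi4 : i < 4) (hin : i < n - 1) :
    burauMatrix n ⟨i, hin⟩ = emb h5 (burauMatrix 5 ⟨i, hi4⟩) := by
  ext k l
  rw [emb_apply]
  by_cases hk : (k:ℕ) < 5 <;> by_cases hl : (l:ℕ) < 5
  · rw [embE_symm_lt _ _ hk, embE_symm_lt _ _ hl, Matrix.fromBlocks_apply₁₁]
    simp only [burauMatrix, Fin.ext_iff, Fin.val_mk]
  · rw [embE_symm_lt _ _ hk, embE_symm_ge _ _ hl, Matrix.fromBlocks_apply₁₂,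
      Matrix.zero_apply]
    simp only [burauMatrix, Fin.ext_iff, Fin.val_mk]
    split_ifs <;> omega
  · rw [embE_symm_ge _ _ hk, embE_symm_lt _ _ hl, Matrix.fromBlocks_apply₂₁,
      Matrix.zero_apply]
    simp only [burauMatrix, Fin.ext_iff, Fin.val_mk]
    split_ifs <;> omega
  · rw [embE_symm_ge _ _ hk, embE_symm_ge _ _ hl, Matrix.fromBlocks_apply₂₂,
      Matrix.one_apply]
    simp only [burauMatrix, Fin.ext_iff, Fin.val_mk]
    split_ifs <;> omega

lemma key3 : (burauMatrix 5 ⟨0, by omega⟩ * burauMatrix 5 ⟨1, by omega⟩)^6 = 1 := by decide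

lemma key5 : (burauMatrix 5 ⟨0, by omega⟩ * burauMatrix 5 ⟨1, by omega⟩ *
    burauMatrix 5 ⟨2, by omega⟩ * burauMatrix 5 ⟨3, by omega⟩)^10 = 1 := by decide

end Aux

/-- `β : B_n → GL_n(ℤ)` is the integral Burau representation (the unreduced Burau
representation evaluated at `t = -1`). -/
def IsIntegralBurau (n : ℕ) (β : BraidGroup n →* Matrix.GeneralLinearGroup (Fin n) ℤ) : Prop :=
  ∀ i : Fin (n-1), (β (braidGen n i) : Matrix (Fin n) (Fin n) ℤ) = burauMatrix n i

/-- The squares of Dehn twists about convex curves surrounding odd numbers (at least 3)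
of marked points. -/
def oddTwistSquares (n : ℕ) : Set (BraidGroup n) :=
  {x | ∃ m : ℕ, Odd m ∧ 3 ≤ m ∧ m ≤ n ∧ x = (fullTwist n m) ^ 2}

/-- For `n ≥ 5`, the image under the abelianization map `B_n → ℤ`
(sending each `σ_i` to `1`) of the kernel of the integral Burau representation
contains `4ℤ`. -/
theorem abelianization_of_ker_integralBurau_contains_four (n : ℕ) (hn : 5 ≤ n)
    (β : BraidGroup n →* Matrix.GeneralLinearGroup (Fin n) ℤ) (hβ : IsIntegralBurau n β)
    (ab : BraidGroup n →* Multiplicative ℤ)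
    (hab : ∀ i : Fin (n-1), ab (braidGen n i) = Multiplicative.ofAdd 1) :
    ∀ m : ℤ, (4 : ℤ) ∣ m → ∃ x ∈ β.ker, ab x = Multiplicative.ofAdd m := by
  intro m hm
  obtain ⟨k, rfl⟩ := hm
  have h5 : 5 + (n - 5) = n := by omega
  have hg : ∀ i (hi : i < n-1), braidGen' n i = braidGen n ⟨i, hi⟩ := fun i hi => dif_pos hi
  have hβ' : ∀ (i : ℕ) (hi4 : i < 4) (hin : i < n-1),
      (β (braidGen' n i) : Matrix (Fin n) (Fin n) ℤ) = emb h5 (burauMatrix 5 ⟨i, hi4⟩) := by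
    intro i hi4 hin
    rw [hg i hin, hβ, burau_emb h5 i hi4 hin]
  have ft3 : fullTwist n 3 = (braidGen' n 0 * braidGen' n 1)^3 := by
    simp [fullTwist, List.range_succ]
  have ft5 : fullTwist n 5 =
      (braidGen' n 0 * braidGen' n 1 * braidGen' n 2 * braidGen' n 3)^5 := by
    simp [fullTwist, List.range_succ, mul_assoc]
  have hA : (fullTwist n 3)^2 ∈ β.ker := by
    refine MonoidHom.mem_ker.mpr (Units.ext ?_)
    rw [ft3, ← pow_mul, show (3*2 : ℕ) = 6 from rfl, map_pow, Units.val_pow_eq_pow_val,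
      map_mul, Units.val_mul, hβ' 0 (by omega) (by omega), hβ' 1 (by omega) (by omega),
      ← map_mul, ← map_pow, key3, map_one, Units.val_one]
  have hB : (fullTwist n 5)^2 ∈ β.ker := by
    refine MonoidHom.mem_ker.mpr (Units.ext ?_)
    rw [ft5, ← pow_mul, show (5*2 : ℕ) = 10 from rfl, map_pow, Units.val_pow_eq_pow_val,
      map_mul, map_mul, map_mul, Units.val_mul, Units.val_mul, Units.val_mul,
      hβ' 0 (by omega) (by omega), hβ' 1 (by omega) (by omega),
      hβ' 2 (by omega) (by omega), hβ' 3 (by omega) (by omega),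
      ← map_mul, ← map_mul, ← map_mul, ← map_pow, key5, map_one, Units.val_one]
  have abg : ∀ (i : ℕ) (hi : i < n-1), ab (braidGen' n i) = Multiplicative.ofAdd 1 := by
    intro i hi; rw [hg i hi]; exact hab _
  have ab3 : ab ((fullTwist n 3)^2) = Multiplicative.ofAdd 12 := by
    rw [ft3, map_pow, map_pow, map_mul, abg 0 (by omega), abg 1 (by omega)]
    decide
  have ab5 : ab ((fullTwist n 5)^2) = Multiplicative.ofAdd 40 := by
    rw [ft5, map_pow, map_pow, map_mul, map_mul, map_mul,
      abg 0 (by omega), abg 1 (by omega), abg 2 (by omega), abg 3 (by omega)]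
    decide
  refine ⟨((fullTwist n 5)^2)^k * (((fullTwist n 3)^2)^(3*k))⁻¹, ?_, ?_⟩
  · exact mul_mem (Subgroup.zpow_mem _ hB k) (inv_mem (Subgroup.zpow_mem _ hA (3*k)))
  · rw [map_mul, map_inv, map_zpow, map_zpow, ab3, ab5,
      ← ofAdd_zsmul, ← ofAdd_zsmul, ← ofAdd_neg, ← ofAdd_add]
    congr 1
    simp only [smul_eq_mul]
    ring
end
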